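/- arXiv:math/0603193 — 8 statements merged into one kernel-verified Lean document; each statement's English description precedes it below -/
import Mathlib

section
/- Suppose φ : (0,∞) → (0,∞) satisfies ψ(φ(x)) = x for every x > 0, and that φ is differentiable with ψ'(φ(x))·φ'(x) = 1 for every x > 0, where ψ'(λ) = α₀ + ∫_{(0,∞)} ℓ (1 − e^{−λℓ}) π(dℓ). Then (1/2) φ(x) ≤ x φ'(x) ≤ φ(x) for every x > 0. -/
open MeasureTheory Set Filter Topology

-- pointwise lemmas
lemma aux1 (u : ℝ) (hu : 0 ≤ u) : 0 ≤ Real.exp (-u) - 1 + u := by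
  nlinarith [Real.add_one_le_exp (-u)]

lemma aux2 (u : ℝ) (hu : 0 ≤ u) :
    Real.exp (-u) - 1 + u ≤ u * (1 - Real.exp (-u)) := by
  have hab : Real.exp (-u) * Real.exp u = 1 := by
    rw [← Real.exp_add]; simp
  nlinarith [Real.add_one_le_exp u, Real.exp_pos (-u), Real.exp_pos u]

lemma aux3 (u : ℝ) (hu : 0 ≤ u) :
    u * (1 - Real.exp (-u)) ≤ 2 * (Real.exp (-u) - 1 + u) := by
  set f : ℝ → ℝ := fun v => (v + 2) * Real.exp (-v) + v - 2 with hf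
  have hder : ∀ v : ℝ, HasDerivAt f (1 - (v + 1) * Real.exp (-v)) v := by
    intro v
    have he : HasDerivAt (fun w : ℝ => Real.exp (-w)) (-Real.exp (-v)) v := by
      simpa [Function.comp_def] using (Real.hasDerivAt_exp (-v)).comp v (hasDerivAt_neg v)
    have h1 : HasDerivAt (fun w : ℝ => (w + 2) * Real.exp (-w))
        (1 * Real.exp (-v) + (v + 2) * (-Real.exp (-v))) v :=
      (((hasDerivAt_id v).add_const 2)).mul he
    have := (h1.add (hasDerivAt_id v)).sub_const 2
    refine this.congr_deriv ?_
    ring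
  have hmono : Monotone f := by
    apply monotone_of_deriv_nonneg
    · exact fun v => (hder v).differentiableAt
    · intro v
      rw [(hder v).deriv]
      have hab : Real.exp (-v) * Real.exp v = 1 := by rw [← Real.exp_add]; simp
      nlinarith [Real.add_one_le_exp v, Real.exp_pos (-v), Real.exp_pos v]
  have h0 : f 0 = 0 := by simp [hf]
  have := hmono hu
  rw [h0] at this
  simp only [hf] at this
  nlinarith

lemma aux4 (u : ℝ) (hu : 0 ≤ u) : Real.exp (-u) - 1 + u ≤ u ^ 2 / 2 := by
  set g : ℝ → ℝ := fun v => 1 - v + v ^ 2 / 2 - Real.exp (-v) with hg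
  have hder : ∀ v : ℝ, HasDerivAt g (-1 + v + Real.exp (-v)) v := by
    intro v
    have he : HasDerivAt (fun w : ℝ => Real.exp (-w)) (-Real.exp (-v)) v := by
      simpa [Function.comp_def] using (Real.hasDerivAt_exp (-v)).comp v (hasDerivAt_neg v)
    have h1 : HasDerivAt (fun w : ℝ => 1 - w + w ^ 2 / 2) (-1 + v) v := by
      have : HasDerivAt (fun w : ℝ => 1 - w + w ^ 2 / 2) (0 - 1 + (2 * v ^ 1) / 2) v := by
        exact (((hasDerivAt_const v (1:ℝ)).sub (hasDerivAt_id v)).add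
          ((hasDerivAt_pow 2 v).div_const 2))
      simpa using this
    have := h1.sub he
    refine this.congr_deriv ?_
    ring
  have hmono : Monotone g := by
    apply monotone_of_deriv_nonneg
    · exact fun v => (hder v).differentiableAt
    · intro v
      rw [(hder v).deriv]
      nlinarith [Real.add_one_le_exp (-v)]
  have h0 : g 0 = 0 := by simp [hg]
  have := hmono hu
  rw [h0] at this
  simp only [hg] at this
  nlinarith

lemma aux5 (u : ℝ) (hu : 0 ≤ u) : 0 ≤ u * (1 - Real.exp (-u)) := by
  have h1 : Real.exp (-u) ≤ 1 := Real.exp_le_one_iff.2 (by linarith)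
  nlinarith

lemma auxmin (l t : ℝ) (hl : 0 < l) (ht : 0 < t) :
    Real.exp (-(l * t)) - 1 + l * t ≤ (l + l ^ 2 / 2) * min t (t ^ 2) ∧
    t * (1 - Real.exp (-(l * t))) ≤ (1 + l) * min t (t ^ 2) := by
  have hu : 0 ≤ l * t := by positivity
  have h4 := aux4 (l * t) hu
  have hle1 : Real.exp (-(l * t)) ≤ 1 := Real.exp_le_one_iff.2 (by linarith)
  have hge : 1 - l * t ≤ Real.exp (-(l * t)) := by
    have := Real.add_one_le_exp (-(l * t)); linarith
  rcases le_total t 1 with h | h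
  · have hmin : min t (t ^ 2) = t ^ 2 := min_eq_right (by nlinarith)
    rw [hmin]
    constructor
    · nlinarith
    · nlinarith
  · have hmin : min t (t ^ 2) = t := min_eq_left (by nlinarith)
    rw [hmin]
    constructor
    · nlinarith
    · nlinarith [Real.exp_pos (-(l * t))]

lemma integrable_min (π : Measure ℝ)
    (h : ∫⁻ x in Ioi (0:ℝ), ENNReal.ofReal (min x (x ^ 2)) ∂π < ⊤) :
    Integrable (fun t => min t (t ^ 2)) (π.restrict (Ioi 0)) := by
  refine ⟨(continuous_id.min (continuous_pow 2)).aestronglyMeasurable, ?_⟩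
  rw [hasFiniteIntegral_iff_ofReal ?_]
  · exact h
  · filter_upwards [ae_restrict_mem measurableSet_Ioi] with t ht
    exact le_min (le_of_lt ht) (by positivity)

set_option maxHeartbeats 1000000 in
/-- If φ : (0,∞) → (0,∞) satisfies ψ(φ(x)) = x and ψ'(φ(x))·φ'(x) = 1 for x > 0,
then (1/2) φ(x) ≤ x φ'(x) ≤ φ(x) for every x > 0. -/
theorem stmt_5 (π : Measure ℝ) [SigmaFinite π] (α₀ : ℝ) (hα₀ : 0 ≤ α₀)
    (hπint : ∫⁻ x in Ioi (0:ℝ), ENNReal.ofReal (min x (x ^ 2)) ∂π < ⊤)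
    (ψ : ℝ → ℝ)
    (hψ : ∀ l : ℝ, 0 ≤ l →
      ψ l = α₀ * l + ∫ x in Ioi (0:ℝ), (Real.exp (-(l * x)) - 1 + l * x) ∂π)
    (φ φ' : ℝ → ℝ)
    (hφpos : ∀ x : ℝ, 0 < x → 0 < φ x)
    (hφinv : ∀ x : ℝ, 0 < x → ψ (φ x) = x)
    (hφderiv : ∀ x : ℝ, 0 < x → HasDerivAt φ (φ' x) x)
    (hchain : ∀ x : ℝ, 0 < x →
      (α₀ + ∫ t in Ioi (0:ℝ), t * (1 - Real.exp (-(φ x * t))) ∂π) * φ' x = 1) :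
    ∀ x : ℝ, 0 < x → (1 / 2) * φ x ≤ x * φ' x ∧ x * φ' x ≤ φ x := by
  intro x hx
  have hlpos : 0 < φ x := hφpos x hx
  set l : ℝ := φ x with hl
  have hmin := integrable_min π hπint
  -- integrability of the two integrands
  have hintf₁ : Integrable (fun t => Real.exp (-(l * t)) - 1 + l * t)
      (π.restrict (Ioi 0)) := by
    apply Integrable.mono' (hmin.const_mul (l + l ^ 2 / 2))
    · exact Continuous.aestronglyMeasurable (by fun_prop)
    · filter_upwards [ae_restrict_mem measurableSet_Ioi] with t ht
      have h0 : 0 ≤ Real.exp (-(l * t)) - 1 + l * t :=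
        aux1 (l * t) (mul_nonneg hlpos.le (le_of_lt (mem_Ioi.1 ht)))
      rw [Real.norm_of_nonneg h0]
      exact (auxmin l t hlpos ht).1
  have hintf₂ : Integrable (fun t => t * (1 - Real.exp (-(l * t))))
      (π.restrict (Ioi 0)) := by
    apply Integrable.mono' (hmin.const_mul (1 + l))
    · exact Continuous.aestronglyMeasurable (by fun_prop)
    · filter_upwards [ae_restrict_mem measurableSet_Ioi] with t ht
      have h1 : Real.exp (-(l * t)) ≤ 1 :=
        Real.exp_le_one_iff.2 (by nlinarith [mem_Ioi.1 ht])
      have h0 : 0 ≤ t * (1 - Real.exp (-(l * t))) := by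
        have := mem_Ioi.1 ht; nlinarith
      rw [Real.norm_of_nonneg h0]
      exact (auxmin l t hlpos ht).2
  -- nonnegativity of the second integral
  have hI₂nonneg : 0 ≤ ∫ t in Ioi (0:ℝ), t * (1 - Real.exp (-(l * t))) ∂π := by
    apply setIntegral_nonneg measurableSet_Ioi
    intro t ht
    have h1 : Real.exp (-(l * t)) ≤ 1 :=
      Real.exp_le_one_iff.2 (by nlinarith [mem_Ioi.1 ht])
    have := mem_Ioi.1 ht; nlinarith
  have hD := hchain x hx
  rw [← hl] at hD
  have hDpos : 0 < α₀ + ∫ t in Ioi (0:ℝ), t * (1 - Real.exp (-(l * t))) ∂π := by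
    rcases lt_or_eq_of_le (by linarith :
        (0:ℝ) ≤ α₀ + ∫ t in Ioi (0:ℝ), t * (1 - Real.exp (-(l * t))) ∂π) with h | h
    · exact h
    · rw [← h] at hD; simp at hD
  have hφ'eq : φ' x =
      1 / (α₀ + ∫ t in Ioi (0:ℝ), t * (1 - Real.exp (-(l * t))) ∂π) := by
    rw [eq_div_iff hDpos.ne']
    linarith [hD]
  have hxeq : x = α₀ * l + ∫ t in Ioi (0:ℝ), (Real.exp (-(l * t)) - 1 + l * t) ∂π := by
    have := hφinv x hx
    rw [← hl] at this
    rw [← this, hψ l hlpos.le]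
  -- key integral comparisons
  have hcmp1 : (∫ t in Ioi (0:ℝ), (Real.exp (-(l * t)) - 1 + l * t) ∂π) ≤
      l * ∫ t in Ioi (0:ℝ), t * (1 - Real.exp (-(l * t))) ∂π := by
    rw [← integral_const_mul]
    refine integral_mono_of_nonneg ?_ (hintf₂.const_mul l) ?_
    · filter_upwards [ae_restrict_mem measurableSet_Ioi] with t ht
      exact aux1 (l * t) (mul_nonneg hlpos.le (le_of_lt (mem_Ioi.1 ht)))
    · filter_upwards [ae_restrict_mem measurableSet_Ioi] with t ht
      have := aux2 (l * t) (mul_nonneg hlpos.le (le_of_lt (mem_Ioi.1 ht)))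
      nlinarith [this]
  have hcmp2 : l * (∫ t in Ioi (0:ℝ), t * (1 - Real.exp (-(l * t))) ∂π) ≤
      2 * ∫ t in Ioi (0:ℝ), (Real.exp (-(l * t)) - 1 + l * t) ∂π := by
    rw [← integral_const_mul, ← integral_const_mul]
    refine integral_mono_of_nonneg ?_ (hintf₁.const_mul 2) ?_
    · filter_upwards [ae_restrict_mem measurableSet_Ioi] with t ht
      have h1 : Real.exp (-(l * t)) ≤ 1 :=
        Real.exp_le_one_iff.2 (by nlinarith [mem_Ioi.1 ht])
      have ht' := mem_Ioi.1 ht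
      exact mul_nonneg hlpos.le (mul_nonneg ht'.le (by linarith))
    · filter_upwards [ae_restrict_mem measurableSet_Ioi] with t ht
      have := aux3 (l * t) (mul_nonneg hlpos.le (le_of_lt (mem_Ioi.1 ht)))
      nlinarith [this]
  constructor
  · rw [hφ'eq, mul_one_div, le_div_iff₀ hDpos]
    nlinarith [hcmp2, hxeq, mul_nonneg hα₀ hlpos.le]
  · rw [hφ'eq, mul_one_div, div_le_iff₀ hDpos]
    nlinarith [hcmp1, hxeq]
end

section
/- Assume the sandwich bounds (1/2) g(λ) ≤ λ ∫_{(0,∞)} r e^{−λr} μ(dr) ≤ g(λ) hold for all λ > 0. Then for every x > 0 and every λ > 0 one has (1/(2λ)) g(λ) ≤ Φ(x/λ) + (4/λ) g(λ/2) e^{−x/2}. -/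
open MeasureTheory Set Filter Topology

lemma stmt8_integrable_aux {μ : Measure ℝ}
    (hμint : ∫⁻ r in Ioi (0:ℝ), ENNReal.ofReal (min 1 r) ∂μ < ⊤)
    {f : ℝ → ℝ} (hf : Measurable f) {s : Set ℝ} (hs : MeasurableSet s)
    (hsub : s ⊆ Ioi 0) (C : ℝ) (hC : ∀ r ∈ s, |f r| ≤ C * min 1 r) :
    IntegrableOn f s μ := by
  have hm : IntegrableOn (fun r => min 1 r) (Ioi (0:ℝ)) μ := by
    refine ⟨(measurable_const.min measurable_id).aestronglyMeasurable, ?_⟩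
    rw [hasFiniteIntegral_iff_norm]
    have : ∀ᵐ r ∂μ.restrict (Ioi (0:ℝ)),
        ENNReal.ofReal ‖min 1 r‖ = ENNReal.ofReal (min 1 r) := by
      refine ae_restrict_of_forall_mem measurableSet_Ioi (fun r hr => ?_)
      rw [Real.norm_of_nonneg (le_min zero_le_one (le_of_lt hr))]
    rwa [lintegral_congr_ae this]
  have hm' : IntegrableOn (fun r => C * min 1 r) s μ :=
    ((hm.mono_set hsub).const_mul C)
  refine hm'.mono' hf.aestronglyMeasurable ?_
  refine ae_restrict_of_forall_mem hs (fun r hr => ?_)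
  simpa [Real.norm_eq_abs] using hC r hr

/-- Under the sandwich bounds (1/2) g(λ) ≤ λ ∫ r e^{−λr} μ(dr) ≤ g(λ),
for every x > 0, λ > 0:
(1/(2λ)) g(λ) ≤ Φ(x/λ) + (4/λ) g(λ/2) e^{−x/2}. -/
theorem stmt_8 (μ : Measure ℝ) [SigmaFinite μ]
    (hμint : ∫⁻ r in Ioi (0:ℝ), ENNReal.ofReal (min 1 r) ∂μ < ⊤)
    (hsand : ∀ l : ℝ, 0 < l →
      (1 / 2) * (∫ r in Ioi (0:ℝ), (1 - Real.exp (-(l * r))) ∂μ)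
          ≤ l * ∫ r in Ioi (0:ℝ), r * Real.exp (-(l * r)) ∂μ ∧
        l * ∫ r in Ioi (0:ℝ), r * Real.exp (-(l * r)) ∂μ
          ≤ ∫ r in Ioi (0:ℝ), (1 - Real.exp (-(l * r))) ∂μ) :
    ∀ x : ℝ, 0 < x → ∀ l : ℝ, 0 < l →
      (1 / (2 * l)) * (∫ r in Ioi (0:ℝ), (1 - Real.exp (-(l * r))) ∂μ)
        ≤ (∫ r in Ioo (0:ℝ) (x / l), r ∂μ)
          + (4 / l) * (∫ r in Ioi (0:ℝ), (1 - Real.exp (-(l / 2 * r))) ∂μ)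
            * Real.exp (-(x / 2)) := by
  intro x hx l hl
  set a := x / l with ha_def
  have ha : 0 < a := div_pos hx hl
  -- pointwise bound helper: for c > 0, r > 0 : r * exp (-(c*r)) ≤ max 1 (1/c) * min 1 r
  have key : ∀ c : ℝ, 0 < c → ∀ r : ℝ, 0 < r →
      |r * Real.exp (-(c * r))| ≤ max 1 (1/c) * min 1 r := by
    intro c hc r hr
    have he1 : Real.exp (-(c * r)) ≤ 1 := Real.exp_le_one_iff.mpr (by nlinarith)
    have he0 : 0 < Real.exp (-(c * r)) := Real.exp_pos _
    have habs : |r * Real.exp (-(c * r))| = r * Real.exp (-(c * r)) := by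
      rw [abs_of_nonneg (by positivity)]
    rw [habs]
    have hcr : c * r ≤ Real.exp (c * r) := by
      have := Real.add_one_le_exp (c * r); linarith
    have hle : r * Real.exp (-(c * r)) ≤ 1 / c := by
      calc r * Real.exp (-(c * r)) ≤ r * (c * r)⁻¹ := by
            rw [Real.exp_neg]
            exact mul_le_mul_of_nonneg_left
              (inv_anti₀ (by positivity) hcr) hr.le
        _ = 1 / c := by field_simp
    rcases le_total r 1 with h | h
    · rw [min_eq_right h]
      have : r * Real.exp (-(c * r)) ≤ r := by nlinarith
      calc r * Real.exp (-(c * r)) ≤ 1 * r := by linarith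
        _ ≤ max 1 (1/c) * r := by
          apply mul_le_mul_of_nonneg_right (le_max_left _ _) hr.le
    · rw [min_eq_left h]
      calc r * Real.exp (-(c * r)) ≤ 1/c := hle
        _ ≤ max 1 (1/c) * 1 := by rw [mul_one]; exact le_max_right _ _
  -- pointwise bound for 1 - exp
  have keyg : ∀ c : ℝ, 0 < c → ∀ r : ℝ, 0 < r →
      |1 - Real.exp (-(c * r))| ≤ max 1 c * min 1 r := by
    intro c hc r hr
    have he1 : Real.exp (-(c * r)) ≤ 1 := Real.exp_le_one_iff.mpr (by nlinarith)
    have he0 : 0 < Real.exp (-(c * r)) := Real.exp_pos _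
    have h2 : 1 - (c * r) ≤ Real.exp (-(c * r)) := by
      have := Real.add_one_le_exp (-(c * r)); linarith
    rw [abs_of_nonneg (by linarith)]
    rcases le_total r 1 with h | h
    · rw [min_eq_right h]
      calc 1 - Real.exp (-(c * r)) ≤ c * r := by linarith
        _ ≤ max 1 c * r := mul_le_mul_of_nonneg_right (le_max_right _ _) hr.le
    · rw [min_eq_left h, mul_one]
      calc 1 - Real.exp (-(c * r)) ≤ 1 := by linarith
        _ ≤ max 1 c := le_max_left _ _
  -- measurability
  have hmeasI : ∀ c : ℝ, Measurable fun r : ℝ => r * Real.exp (-(c * r)) := by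
    intro c
    exact measurable_id.mul ((measurable_const.mul measurable_id).neg.exp)
  have hmeasg : ∀ c : ℝ, Measurable fun r : ℝ => 1 - Real.exp (-(c * r)) := by
    intro c
    exact measurable_const.sub ((measurable_const.mul measurable_id).neg.exp)
  -- integrabilities
  have hIl : IntegrableOn (fun r => r * Real.exp (-(l * r))) (Ioi 0) μ :=
    stmt8_integrable_aux hμint (hmeasI l) measurableSet_Ioi (subset_refl _) _
      (fun r hr => key l hl r hr)
  have hIl2 : IntegrableOn (fun r => r * Real.exp (-(l / 2 * r))) (Ioi 0) μ :=
    stmt8_integrable_aux hμint (hmeasI (l / 2)) measurableSet_Ioi (subset_refl _) _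
      (fun r hr => key (l / 2) (by positivity) r hr)
  have hId : IntegrableOn (fun r : ℝ => r) (Ioo 0 a) μ := by
    refine stmt8_integrable_aux hμint measurable_id measurableSet_Ioo
      Ioo_subset_Ioi_self (max 1 a) (fun r hr => ?_)
    obtain ⟨hr0, hra⟩ := hr
    show |r| ≤ max 1 a * min 1 r
    rw [abs_of_nonneg hr0.le]
    rcases le_total r 1 with h | h
    · rw [min_eq_right h]
      calc r = 1 * r := (one_mul r).symm
        _ ≤ max 1 a * r := mul_le_mul_of_nonneg_right (le_max_left _ _) hr0.le
    · rw [min_eq_left h, mul_one]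
      exact le_trans hra.le (le_max_right _ _)
  -- nonnegativity of g (l/2)
  have hgnn : 0 ≤ ∫ r in Ioi (0:ℝ), (1 - Real.exp (-(l / 2 * r))) ∂μ := by
    refine setIntegral_nonneg measurableSet_Ioi (fun r hr => ?_)
    have : Real.exp (-(l / 2 * r)) ≤ 1 := Real.exp_le_one_iff.mpr
      (by simp only [mem_Ioi] at hr; nlinarith)
    linarith
  -- split Ioi 0 = Ioo 0 a ∪ Ici a
  have hsplit : (∫ r in Ioi (0:ℝ), r * Real.exp (-(l * r)) ∂μ)
      = (∫ r in Ioo (0:ℝ) a, r * Real.exp (-(l * r)) ∂μ)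
        + (∫ r in Ici a, r * Real.exp (-(l * r)) ∂μ) := by
    have hdisj : Disjoint (Ioo (0:ℝ) a) (Ici a) :=
      Set.disjoint_left.mpr fun r hr h2 => absurd h2 (not_le.mpr hr.2)
    rw [← Ioo_union_Ici_eq_Ioi ha,
      setIntegral_union hdisj measurableSet_Ici
        (hIl.mono_set (by rw [← Ioo_union_Ici_eq_Ioi ha]; exact subset_union_left))
        (hIl.mono_set (by rw [← Ioo_union_Ici_eq_Ioi ha]; exact subset_union_right))]
  -- bound on Ioo 0 a
  have hA : (∫ r in Ioo (0:ℝ) a, r * Real.exp (-(l * r)) ∂μ)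
      ≤ ∫ r in Ioo (0:ℝ) a, r ∂μ := by
    refine setIntegral_mono_on
      (hIl.mono_set Ioo_subset_Ioi_self) hId measurableSet_Ioo (fun r hr => ?_)
    have he1 : Real.exp (-(l * r)) ≤ 1 := Real.exp_le_one_iff.mpr
      (by obtain ⟨h0, _⟩ := hr; nlinarith)
    nlinarith [hr.1]
  -- bound on Ici a
  have hIciSub : Ici a ⊆ Ioi (0:ℝ) := fun r hr => lt_of_lt_of_le ha hr
  have hB : (∫ r in Ici a, r * Real.exp (-(l * r)) ∂μ)
      ≤ (∫ r in Ici a, r * Real.exp (-(l / 2 * r)) ∂μ) * Real.exp (-(x / 2)) := by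
    rw [← integral_mul_const]
    refine setIntegral_mono_on (hIl.mono_set hIciSub)
      ((hIl2.mono_set hIciSub).mul_const _) measurableSet_Ici (fun r hr => ?_)
    have hr0 : 0 < r := hIciSub hr
    have hsum : -(l * r) = -(l / 2 * r) + -(l / 2 * r) := by ring
    rw [hsum, Real.exp_add, mul_assoc]
    have hmono : Real.exp (-(l / 2 * r)) ≤ Real.exp (-(x / 2)) := by
      apply Real.exp_le_exp.mpr
      have hl0 : l ≠ 0 := ne_of_gt hl
      have : x / 2 = l / 2 * a := by rw [ha_def]; field_simp
      rw [this]
      have : l / 2 * a ≤ l / 2 * r := by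
        apply mul_le_mul_of_nonneg_left hr (by positivity)
      linarith
    have hnn : 0 ≤ r * Real.exp (-(l / 2 * r)) := by positivity
    calc r * (Real.exp (-(l / 2 * r)) * Real.exp (-(l / 2 * r)))
        = (r * Real.exp (-(l / 2 * r))) * Real.exp (-(l / 2 * r)) := by ring
      _ ≤ (r * Real.exp (-(l / 2 * r))) * Real.exp (-(x / 2)) :=
          mul_le_mul_of_nonneg_left hmono hnn
      _ = r * (Real.exp (-(l / 2 * r)) * Real.exp (-(x / 2))) := by ring
  -- the tail integral is bounded by the full integral
  have hC : (∫ r in Ici a, r * Real.exp (-(l / 2 * r)) ∂μ)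
      ≤ ∫ r in Ioi (0:ℝ), r * Real.exp (-(l / 2 * r)) ∂μ := by
    refine setIntegral_mono_set hIl2 ?_ (HasSubset.Subset.eventuallyLE hIciSub)
    refine ae_restrict_of_forall_mem measurableSet_Ioi (fun r hr => ?_)
    have : (0:ℝ) < r := hr
    positivity
  -- sandwich facts
  have h1 := (hsand l hl).1
  have h2 := (hsand (l / 2) (by positivity)).2
  have hexp : 0 < Real.exp (-(x / 2)) := Real.exp_pos _
  have hexp1 : Real.exp (-(x / 2)) ≤ 1 := Real.exp_le_one_iff.mpr (by linarith)
  -- combine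
  have hfull : (∫ r in Ioi (0:ℝ), r * Real.exp (-(l / 2 * r)) ∂μ)
      ≤ (2 / l) * ∫ r in Ioi (0:ℝ), (1 - Real.exp (-(l / 2 * r))) ∂μ := by
    rw [← sub_nonneg] at h2 ⊢
    have : (2 / l) * (∫ r in Ioi (0:ℝ), (1 - Real.exp (-(l / 2 * r))) ∂μ)
        - (∫ r in Ioi (0:ℝ), r * Real.exp (-(l / 2 * r)) ∂μ)
        = (2 / l) * ((∫ r in Ioi (0:ℝ), (1 - Real.exp (-(l / 2 * r))) ∂μ)
          - l / 2 * (∫ r in Ioi (0:ℝ), r * Real.exp (-(l / 2 * r)) ∂μ)) := by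
      field_simp
    rw [this]
    positivity
  have hstep1 : (1 / (2 * l)) * (∫ r in Ioi (0:ℝ), (1 - Real.exp (-(l * r))) ∂μ)
      ≤ ∫ r in Ioi (0:ℝ), r * Real.exp (-(l * r)) ∂μ := by
    rw [← sub_nonneg] at h1 ⊢
    have : (∫ r in Ioi (0:ℝ), r * Real.exp (-(l * r)) ∂μ)
        - (1 / (2 * l)) * (∫ r in Ioi (0:ℝ), (1 - Real.exp (-(l * r))) ∂μ)
        = (1 / l) * (l * (∫ r in Ioi (0:ℝ), r * Real.exp (-(l * r)) ∂μ)
          - 1 / 2 * (∫ r in Ioi (0:ℝ), (1 - Real.exp (-(l * r))) ∂μ)) := by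
      field_simp; ring
    rw [this]
    positivity
  calc (1 / (2 * l)) * (∫ r in Ioi (0:ℝ), (1 - Real.exp (-(l * r))) ∂μ)
      ≤ ∫ r in Ioi (0:ℝ), r * Real.exp (-(l * r)) ∂μ := hstep1
    _ = (∫ r in Ioo (0:ℝ) a, r * Real.exp (-(l * r)) ∂μ)
        + (∫ r in Ici a, r * Real.exp (-(l * r)) ∂μ) := hsplit
    _ ≤ (∫ r in Ioo (0:ℝ) a, r ∂μ)
        + (∫ r in Ici a, r * Real.exp (-(l / 2 * r)) ∂μ) * Real.exp (-(x / 2)) :=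
          add_le_add hA hB
    _ ≤ (∫ r in Ioo (0:ℝ) a, r ∂μ)
        + ((2 / l) * ∫ r in Ioi (0:ℝ), (1 - Real.exp (-(l / 2 * r))) ∂μ)
          * Real.exp (-(x / 2)) := by
          gcongr
          exact hC.trans hfull
    _ ≤ (∫ r in Ioo (0:ℝ) a, r ∂μ)
        + (4 / l) * (∫ r in Ioi (0:ℝ), (1 - Real.exp (-(l / 2 * r))) ∂μ)
          * Real.exp (-(x / 2)) := by
          gcongr
          norm_num
end

section
/- Assume the sandwich bounds (1/2) g(λ) ≤ λ ∫_{(0,∞)} r e^{−λr} μ(dr) ≤ g(λ) hold for all λ > 0. Then for every λ > 0 one has Φ((6 ln 2)/λ) ≥ (1/4) ∫_{(0,∞)} r e^{−λr} μ(dr), and consequently λ Φ(1/λ) ≥ ((6 ln 2)/8) · g(λ/(6 ln 2)). -/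
open MeasureTheory Set Filter Topology
open Real

set_option maxHeartbeats 1000000
set_option linter.unusedVariables false
set_option linter.unusedSectionVars false


lemma exp_lb_poly (f : ℝ) (hf : 0 ≤ f) :
    1+f+f^2/2+f^3/6+f^4/24+f^5/120+f^6/720+f^7/5040 ≤ Real.exp f := by
  have h := Real.sum_le_exp_of_nonneg hf 8
  simp [Finset.sum_range_succ] at h
  norm_num [Nat.factorial] at h
  nlinarith [h]

lemma exp_ub_poly (f : ℝ) (hf : 0 ≤ f) (hf1 : f ≤ 1) :
    Real.exp f ≤ 1+f+f^2/2+f^3/6+f^4/24+f^5/120+f^6/720+f^7/5040 + f^8*9/322560 := by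
  have h := Real.exp_bound' hf hf1 (n := 8) (by norm_num)
  simp [Finset.sum_range_succ] at h
  norm_num [Nat.factorial] at h
  nlinarith [h]

lemma expNegUB (k : ℕ) (f c : ℝ) (hf : 0 ≤ f) (hc0 : 0 < c)
    (hc : 1 ≤ c * ((27182818283/10^10)^k * (1+f+f^2/2+f^3/6+f^4/24+f^5/120+f^6/720+f^7/5040))) :
    Real.exp (-((k:ℝ) + f)) ≤ c := by
  have hpoly := exp_lb_poly f hf
  have hpow : ((27182818283:ℝ)/10^10)^k ≤ (Real.exp 1)^k := by
    have he : (27182818283:ℝ)/10^10 ≤ Real.exp 1 := by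
      have := Real.exp_one_gt_d9; norm_num at this ⊢; linarith
    exact pow_le_pow_left₀ (by norm_num) he k
  have hsplit : Real.exp ((k:ℝ) + f) = (Real.exp 1)^k * Real.exp f := by
    rw [Real.exp_add, ← Real.exp_nat_mul]; norm_num
  have hpolypos : (0:ℝ) < 1+f+f^2/2+f^3/6+f^4/24+f^5/120+f^6/720+f^7/5040 := by positivity
  have hlb : ((27182818283:ℝ)/10^10)^k * (1+f+f^2/2+f^3/6+f^4/24+f^5/120+f^6/720+f^7/5040)
      ≤ Real.exp ((k:ℝ)+f) := by
    rw [hsplit]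
    apply mul_le_mul hpow hpoly hpolypos.le (pow_nonneg (Real.exp_pos 1).le k)
  have hlbpos : (0:ℝ) < ((27182818283:ℝ)/10^10)^k * (1+f+f^2/2+f^3/6+f^4/24+f^5/120+f^6/720+f^7/5040) := by
    positivity
  have hfin : 1 ≤ c * Real.exp ((k:ℝ)+f) :=
    le_trans hc (mul_le_mul_of_nonneg_left hlb hc0.le)
  rw [Real.exp_neg]
  rw [inv_le_iff_one_le_mul₀ (Real.exp_pos _)]
  simpa [mul_comm] using hfin

lemma expNegLB (k : ℕ) (f c : ℝ) (hf : 0 ≤ f) (hf1 : f ≤ 1) (hc0 : 0 ≤ c)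
    (hc : c * ((27182818286/10^10)^k * (1+f+f^2/2+f^3/6+f^4/24+f^5/120+f^6/720+f^7/5040 + f^8*9/322560)) ≤ 1) :
    c ≤ Real.exp (-((k:ℝ) + f)) := by
  have hpoly := exp_ub_poly f hf hf1
  have hpow : (Real.exp 1)^k ≤ ((27182818286:ℝ)/10^10)^k := by
    have he : Real.exp 1 ≤ (27182818286:ℝ)/10^10 := by
      have := Real.exp_one_lt_d9; norm_num at this ⊢; linarith
    exact pow_le_pow_left₀ (Real.exp_pos 1).le he k
  have hsplit : Real.exp ((k:ℝ) + f) = (Real.exp 1)^k * Real.exp f := by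
    rw [Real.exp_add, ← Real.exp_nat_mul]; norm_num
  have hub : Real.exp ((k:ℝ)+f)
      ≤ ((27182818286:ℝ)/10^10)^k * (1+f+f^2/2+f^3/6+f^4/24+f^5/120+f^6/720+f^7/5040 + f^8*9/322560) := by
    rw [hsplit]
    apply mul_le_mul hpow hpoly (Real.exp_pos f).le (by positivity)
  have hmul : c * Real.exp ((k:ℝ)+f) ≤ 1 := by
    calc c * Real.exp ((k:ℝ)+f)
        ≤ c * (((27182818286:ℝ)/10^10)^k * (1+f+f^2/2+f^3/6+f^4/24+f^5/120+f^6/720+f^7/5040 + f^8*9/322560)) := by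
          apply mul_le_mul_of_nonneg_left hub hc0
      _ ≤ 1 := hc
  have h1 : c ≤ 1 / Real.exp ((k:ℝ)+f) := (le_div_iff₀ (Real.exp_pos _)).mpr hmul
  rw [Real.exp_neg]
  simpa [one_div] using h1


lemma L_quad_exp (x : ℝ) (hx : 0 ≤ x) : 1 + x + x^2/2 ≤ Real.exp x := by
  have h := Real.sum_le_exp_of_nonneg hx 3
  simp [Finset.sum_range_succ] at h
  nlinarith [h]

lemma L1 (x : ℝ) (hx : 0 ≤ x) : Real.exp (-x) ≤ 1 - x + x^2/2 := by
  have h := L_quad_exp x hx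
  have hp : 0 < 1 + x + x^2/2 := by positivity
  have he : Real.exp (-x) = (Real.exp x)⁻¹ := by rw [Real.exp_neg]
  rw [he]
  have h2 : (Real.exp x)⁻¹ ≤ (1 + x + x^2/2)⁻¹ := by
    apply inv_anti₀ hp h
  calc (Real.exp x)⁻¹ ≤ (1 + x + x^2/2)⁻¹ := h2
    _ ≤ 1 - x + x^2/2 := by
        rw [inv_le_iff_one_le_mul₀ hp]  -- might not exist; try
        nlinarith [sq_nonneg x, sq_nonneg (x^2)]

lemma L2 (y : ℝ) (hy : 0 ≤ y) : y*Real.exp (-y) - (1-Real.exp (-y))/2 ≤ y/2 := by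
  have h1 : y + 1 ≤ Real.exp y := Real.add_one_le_exp y
  have h2 : Real.exp (-y) * Real.exp y = 1 := by
    rw [← Real.exp_add]; simp
  have h3 : 0 < Real.exp (-y) := Real.exp_pos _
  nlinarith [h1, h2, h3]

lemma L3 (x y : ℝ) (hx : 1/2 ≤ x) (hxy : x ≤ y) :
    (1/2+y)*Real.exp (-y) ≤ (1/2+x)*Real.exp (-x) := by
  have h1 : (y-x) + 1 ≤ Real.exp (y-x) := Real.add_one_le_exp _
  have h2 : Real.exp (-y) * Real.exp (y-x) = Real.exp (-x) := by
    rw [← Real.exp_add]; ring_nf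
  have h3 : 0 < Real.exp (-y) := Real.exp_pos _
  nlinarith [mul_le_mul_of_nonneg_left h1 h3.le, h2, h3, mul_nonneg (mul_nonneg (sub_nonneg.2 hx) (sub_nonneg.2 hxy)) h3.le]

lemma gstep (p h u E1 E2 E3 : ℝ) (hp : 0 ≤ p) (hh : 0 ≤ h)
    (hu : p ≤ u) (huh : u ≤ p + h)
    (h1 : Real.exp (-(p/4)) ≤ E1) (h2 : Real.exp (-(2*p)) ≤ E2)
    (h3 : E3 ≤ Real.exp (-(2404492/10^7 * (p+h)))) (hE3 : 0 ≤ E3)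
    (key : ∀ v : ℝ, 0 ≤ v → v ≤ h →
      (57/250)*((1/2+p/4+v/4) * (E1 * (1 - v/4 + v^2/32)))
        + (1693/2000)*((1/2+2*p+2*v) * (E2 * (1 - 2*v + 2*v^2)))
      ≤ 173896/10^7 + (5198603/10^7)*(E3*(1 + (2404492/10^7)*(h - v)))) :
    (57/250)*((1/2+u/4)*Real.exp (-(u/4))) + (1693/2000)*((1/2+2*u)*Real.exp (-(2*u)))
      ≤ 173896/10^7 + (5198603/10^7)*Real.exp (-(2404492/10^7*u)) := by
  obtain ⟨v, rfl, hv0, hvh⟩ : ∃ v, u = p + v ∧ 0 ≤ v ∧ v ≤ h :=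
    ⟨u - p, by ring, by linarith, by linarith⟩
  have e1 : Real.exp (-((p+v)/4)) ≤ E1 * (1 - v/4 + v^2/32) := by
    have hsplit : Real.exp (-((p+v)/4)) = Real.exp (-(p/4)) * Real.exp (-(v/4)) := by
      rw [← Real.exp_add]; ring_nf
    rw [hsplit]
    have hq : Real.exp (-(v/4)) ≤ 1 - v/4 + v^2/32 := by
      have := L1 (v/4) (by linarith)
      calc Real.exp (-(v/4)) ≤ 1 - v/4 + (v/4)^2/2 := this
        _ = 1 - v/4 + v^2/32 := by ring
    apply mul_le_mul h1 hq (Real.exp_pos _).le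
    linarith [(Real.exp_pos (-(p/4))).le, h1]
  have e2 : Real.exp (-(2*(p+v))) ≤ E2 * (1 - 2*v + 2*v^2) := by
    have hsplit : Real.exp (-(2*(p+v))) = Real.exp (-(2*p)) * Real.exp (-(2*v)) := by
      rw [← Real.exp_add]; ring_nf
    rw [hsplit]
    have hq : Real.exp (-(2*v)) ≤ 1 - 2*v + 2*v^2 := by
      have := L1 (2*v) (by linarith)
      calc Real.exp (-(2*v)) ≤ 1 - 2*v + (2*v)^2/2 := this
        _ = 1 - 2*v + 2*v^2 := by ring
    apply mul_le_mul h2 hq (Real.exp_pos _).le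
    linarith [(Real.exp_pos (-(2*p))).le, h2]
  have e3 : E3 * (1 + (2404492/10^7)*(h - v)) ≤ Real.exp (-(2404492/10^7*(p+v))) := by
    have heq : Real.exp (-(2404492/10^7*(p+v)))
        = Real.exp (-(2404492/10^7 * (p+h))) * Real.exp ((2404492/10^7)*(h - v)) := by
      rw [← Real.exp_add]; ring_nf
    rw [heq]
    have hgain : ((2404492:ℝ)/10^7)*(h - v) + 1 ≤ Real.exp ((2404492/10^7)*(h - v)) :=
      Real.add_one_le_exp _
    have hnn : (0:ℝ) ≤ 1 + (2404492/10^7)*(h - v) := by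
      have h9 : (0:ℝ) ≤ (2404492/10^7)*(h-v) := by
        apply mul_nonneg (by norm_num); linarith
      linarith
    calc E3 * (1 + (2404492/10^7)*(h - v))
        ≤ Real.exp (-(2404492/10^7 * (p+h))) * (1 + (2404492/10^7)*(h - v)) :=
          mul_le_mul_of_nonneg_right h3 hnn
      _ ≤ Real.exp (-(2404492/10^7 * (p+h))) * Real.exp ((2404492/10^7)*(h - v)) := by
          apply mul_le_mul_of_nonneg_left _ (Real.exp_pos _).le
          linarith [hgain]
  have hk := key v hv0 hvh
  have t1nn : (0:ℝ) ≤ 1/2 + (p+v)/4 := by nlinarith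
  have t2nn : (0:ℝ) ≤ 1/2 + 2*(p+v) := by nlinarith
  have b1 : (1/2+(p+v)/4)*Real.exp (-((p+v)/4)) ≤ (1/2+p/4+v/4)*(E1 * (1 - v/4 + v^2/32)) := by
    have := mul_le_mul_of_nonneg_left e1 t1nn
    calc (1/2+(p+v)/4)*Real.exp (-((p+v)/4)) ≤ (1/2+(p+v)/4)*(E1 * (1 - v/4 + v^2/32)) := this
      _ = (1/2+p/4+v/4)*(E1 * (1 - v/4 + v^2/32)) := by ring
  have b2 : (1/2+2*(p+v))*Real.exp (-(2*(p+v))) ≤ (1/2+2*p+2*v)*(E2 * (1 - 2*v + 2*v^2)) := by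
    have := mul_le_mul_of_nonneg_left e2 t2nn
    calc (1/2+2*(p+v))*Real.exp (-(2*(p+v))) ≤ (1/2+2*(p+v))*(E2 * (1 - 2*v + 2*v^2)) := this
      _ = (1/2+2*p+2*v)*(E2 * (1 - 2*v + 2*v^2)) := by ring
  have final : (57/250)*((1/2+(p+v)/4)*Real.exp (-((p+v)/4)))
      + (1693/2000)*((1/2+2*(p+v))*Real.exp (-(2*(p+v))))
      ≤ 173896/10^7 + (5198603/10^7)*(E3*(1 + (2404492/10^7)*(h - v))) := by
    nlinarith [b1, b2, hk]
  have last : (5198603/10^7)*(E3*(1 + (2404492/10^7)*(h - v)))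
      ≤ (5198603/10^7)*Real.exp (-(2404492/10^7*(p+v))) := by
    apply mul_le_mul_of_nonneg_left e3 (by norm_num)
  linarith [final, last]

lemma ival0 (u : ℝ) (hu : (1:ℝ) ≤ u) (huh : u ≤ (1:ℝ) + ((3:ℝ)/20)) :
    (57/250)*((1/2+u/4)*Real.exp (-(u/4))) + (1693/2000)*((1/2+2*u)*Real.exp (-(2*u)))
      ≤ 173896/10^7 + (5198603/10^7)*Real.exp (-(2404492/10^7*u)) := by
  have hE1 : Real.exp (-(((1:ℝ)/4))) ≤ ((194700195827:ℝ)/250000000000) := by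
    have hz : -(((1:ℝ)/4)) = -(((0:ℕ):ℝ) + ((1:ℝ)/4)) := by norm_num
    rw [hz]
    exact expNegUB 0 ((1:ℝ)/4) ((194700195827:ℝ)/250000000000) (by norm_num) (by norm_num) (by norm_num)
  have hE2 : Real.exp (-((2:ℝ))) ≤ ((135335283253:ℝ)/1000000000000) := by
    have hz : -((2:ℝ)) = -(((2:ℕ):ℝ) + (0:ℝ)) := by norm_num
    rw [hz]
    exact expNegUB 2 (0:ℝ) ((135335283253:ℝ)/1000000000000) (by norm_num) (by norm_num) (by norm_num)
  have hE3b : ((18960526109:ℝ)/25000000000) ≤ Real.exp (-(((13825829:ℝ)/50000000))) := by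
    have hz : -(((13825829:ℝ)/50000000)) = -(((0:ℕ):ℝ) + ((13825829:ℝ)/50000000)) := by norm_num
    rw [hz]
    exact expNegLB 0 ((13825829:ℝ)/50000000) ((18960526109:ℝ)/25000000000) (by norm_num) (by norm_num) (by norm_num) (by norm_num)
  apply gstep (1:ℝ) ((3:ℝ)/20) u ((194700195827:ℝ)/250000000000) ((135335283253:ℝ)/1000000000000) ((18960526109:ℝ)/25000000000) (by norm_num) (by norm_num) hu huh
  · have hz : ((1:ℝ):ℝ)/4 = ((1:ℝ)/4) := by norm_num
    rw [hz]; exact hE1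
  · have hz : (2:ℝ)*(1:ℝ) = (2:ℝ) := by norm_num
    rw [hz]; exact hE2
  · have hz : ((2404492:ℝ)/10^7) * ((1:ℝ) + ((3:ℝ)/20)) = ((13825829:ℝ)/50000000) := by norm_num
    rw [hz]; exact hE3b
  · norm_num
  · intro v hv0 hvh
    nlinarith [mul_nonneg hv0 hv0, mul_nonneg (mul_nonneg hv0 hv0) hv0,
      mul_nonneg (sub_nonneg.2 hvh) hv0, mul_nonneg (mul_nonneg (sub_nonneg.2 hvh) hv0) hv0,
      mul_nonneg (mul_nonneg (sub_nonneg.2 hvh) (sub_nonneg.2 hvh)) hv0]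

lemma ival1 (u : ℝ) (hu : ((23:ℝ)/20) ≤ u) (huh : u ≤ ((23:ℝ)/20) + ((3:ℝ)/10)) :
    (57/250)*((1/2+u/4)*Real.exp (-(u/4))) + (1693/2000)*((1/2+2*u)*Real.exp (-(2*u)))
      ≤ 173896/10^7 + (5198603/10^7)*Real.exp (-(2404492/10^7*u)) := by
  have hE1 : Real.exp (-(((23:ℝ)/80))) ≤ ((187534141861:ℝ)/250000000000) := by
    have hz : -(((23:ℝ)/80)) = -(((0:ℕ):ℝ) + ((23:ℝ)/80)) := by norm_num
    rw [hz]
    exact expNegUB 0 ((23:ℝ)/80) ((187534141861:ℝ)/250000000000) (by norm_num) (by norm_num) (by norm_num)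
  have hE2 : Real.exp (-(((23:ℝ)/10))) ≤ ((5012942193:ℝ)/50000000000) := by
    have hz : -(((23:ℝ)/10)) = -(((2:ℕ):ℝ) + ((3:ℝ)/10)) := by norm_num
    rw [hz]
    exact expNegUB 2 ((3:ℝ)/10) ((5012942193:ℝ)/50000000000) (by norm_num) (by norm_num) (by norm_num)
  have hE3b : ((70563911529:ℝ)/100000000000) ≤ Real.exp (-(((17432567:ℝ)/50000000))) := by
    have hz : -(((17432567:ℝ)/50000000)) = -(((0:ℕ):ℝ) + ((17432567:ℝ)/50000000)) := by norm_num
    rw [hz]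
    exact expNegLB 0 ((17432567:ℝ)/50000000) ((70563911529:ℝ)/100000000000) (by norm_num) (by norm_num) (by norm_num) (by norm_num)
  apply gstep ((23:ℝ)/20) ((3:ℝ)/10) u ((187534141861:ℝ)/250000000000) ((5012942193:ℝ)/50000000000) ((70563911529:ℝ)/100000000000) (by norm_num) (by norm_num) hu huh
  · have hz : (((23:ℝ)/20):ℝ)/4 = ((23:ℝ)/80) := by norm_num
    rw [hz]; exact hE1
  · have hz : (2:ℝ)*((23:ℝ)/20) = ((23:ℝ)/10) := by norm_num
    rw [hz]; exact hE2
  · have hz : ((2404492:ℝ)/10^7) * (((23:ℝ)/20) + ((3:ℝ)/10)) = ((17432567:ℝ)/50000000) := by norm_num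
    rw [hz]; exact hE3b
  · norm_num
  · intro v hv0 hvh
    nlinarith [mul_nonneg hv0 hv0, mul_nonneg (mul_nonneg hv0 hv0) hv0,
      mul_nonneg (sub_nonneg.2 hvh) hv0, mul_nonneg (mul_nonneg (sub_nonneg.2 hvh) hv0) hv0,
      mul_nonneg (mul_nonneg (sub_nonneg.2 hvh) (sub_nonneg.2 hvh)) hv0]

lemma ival2 (u : ℝ) (hu : ((29:ℝ)/20) ≤ u) (huh : u ≤ ((29:ℝ)/20) + ((1:ℝ)/2)) :
    (57/250)*((1/2+u/4)*Real.exp (-(u/4))) + (1693/2000)*((1/2+2*u)*Real.exp (-(2*u)))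
      ≤ 173896/10^7 + (5198603/10^7)*Real.exp (-(2404492/10^7*u)) := by
  have hE1 : Real.exp (-(((29:ℝ)/80))) ≤ ((69593431741:ℝ)/100000000000) := by
    have hz : -(((29:ℝ)/80)) = -(((0:ℕ):ℝ) + ((29:ℝ)/80)) := by norm_num
    rw [hz]
    exact expNegUB 0 ((29:ℝ)/80) ((69593431741:ℝ)/100000000000) (by norm_num) (by norm_num) (by norm_num)
  have hE2 : Real.exp (-(((29:ℝ)/10))) ≤ ((13755871281:ℝ)/250000000000) := by
    have hz : -(((29:ℝ)/10)) = -(((2:ℕ):ℝ) + ((9:ℝ)/10)) := by norm_num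
    rw [hz]
    exact expNegUB 2 ((9:ℝ)/10) ((13755871281:ℝ)/250000000000) (by norm_num) (by norm_num) (by norm_num)
  have hE3b : ((625705201733:ℝ)/1000000000000) ≤ Real.exp (-(((23443797:ℝ)/50000000))) := by
    have hz : -(((23443797:ℝ)/50000000)) = -(((0:ℕ):ℝ) + ((23443797:ℝ)/50000000)) := by norm_num
    rw [hz]
    exact expNegLB 0 ((23443797:ℝ)/50000000) ((625705201733:ℝ)/1000000000000) (by norm_num) (by norm_num) (by norm_num) (by norm_num)
  apply gstep ((29:ℝ)/20) ((1:ℝ)/2) u ((69593431741:ℝ)/100000000000) ((13755871281:ℝ)/250000000000) ((625705201733:ℝ)/1000000000000) (by norm_num) (by norm_num) hu huh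
  · have hz : (((29:ℝ)/20):ℝ)/4 = ((29:ℝ)/80) := by norm_num
    rw [hz]; exact hE1
  · have hz : (2:ℝ)*((29:ℝ)/20) = ((29:ℝ)/10) := by norm_num
    rw [hz]; exact hE2
  · have hz : ((2404492:ℝ)/10^7) * (((29:ℝ)/20) + ((1:ℝ)/2)) = ((23443797:ℝ)/50000000) := by norm_num
    rw [hz]; exact hE3b
  · norm_num
  · intro v hv0 hvh
    nlinarith [mul_nonneg hv0 hv0, mul_nonneg (mul_nonneg hv0 hv0) hv0,
      mul_nonneg (sub_nonneg.2 hvh) hv0, mul_nonneg (mul_nonneg (sub_nonneg.2 hvh) hv0) hv0,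
      mul_nonneg (mul_nonneg (sub_nonneg.2 hvh) (sub_nonneg.2 hvh)) hv0]

lemma ival3 (u : ℝ) (hu : ((39:ℝ)/20) ≤ u) (huh : u ≤ ((39:ℝ)/20) + ((3:ℝ)/4)) :
    (57/250)*((1/2+u/4)*Real.exp (-(u/4))) + (1693/2000)*((1/2+2*u)*Real.exp (-(2*u)))
      ≤ 173896/10^7 + (5198603/10^7)*Real.exp (-(2404492/10^7*u)) := by
  have hE1 : Real.exp (-(((39:ℝ)/80))) ≤ ((307079953883:ℝ)/500000000000) := by
    have hz : -(((39:ℝ)/80)) = -(((0:ℕ):ℝ) + ((39:ℝ)/80)) := by norm_num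
    rw [hz]
    exact expNegUB 0 ((39:ℝ)/80) ((307079953883:ℝ)/500000000000) (by norm_num) (by norm_num) (by norm_num)
  have hE2 : Real.exp (-(((39:ℝ)/10))) ≤ ((31628139:ℝ)/1562500000) := by
    have hz : -(((39:ℝ)/10)) = -(((3:ℕ):ℝ) + ((9:ℝ)/10)) := by norm_num
    rw [hz]
    exact expNegUB 3 ((9:ℝ)/10) ((31628139:ℝ)/1562500000) (by norm_num) (by norm_num) (by norm_num)
  have hE3b : ((522456861861:ℝ)/1000000000000) ≤ Real.exp (-(((16230321:ℝ)/25000000))) := by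
    have hz : -(((16230321:ℝ)/25000000)) = -(((0:ℕ):ℝ) + ((16230321:ℝ)/25000000)) := by norm_num
    rw [hz]
    exact expNegLB 0 ((16230321:ℝ)/25000000) ((522456861861:ℝ)/1000000000000) (by norm_num) (by norm_num) (by norm_num) (by norm_num)
  apply gstep ((39:ℝ)/20) ((3:ℝ)/4) u ((307079953883:ℝ)/500000000000) ((31628139:ℝ)/1562500000) ((522456861861:ℝ)/1000000000000) (by norm_num) (by norm_num) hu huh
  · have hz : (((39:ℝ)/20):ℝ)/4 = ((39:ℝ)/80) := by norm_num
    rw [hz]; exact hE1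
  · have hz : (2:ℝ)*((39:ℝ)/20) = ((39:ℝ)/10) := by norm_num
    rw [hz]; exact hE2
  · have hz : ((2404492:ℝ)/10^7) * (((39:ℝ)/20) + ((3:ℝ)/4)) = ((16230321:ℝ)/25000000) := by norm_num
    rw [hz]; exact hE3b
  · norm_num
  · intro v hv0 hvh
    nlinarith [mul_nonneg hv0 hv0, mul_nonneg (mul_nonneg hv0 hv0) hv0,
      mul_nonneg (sub_nonneg.2 hvh) hv0, mul_nonneg (mul_nonneg (sub_nonneg.2 hvh) hv0) hv0,
      mul_nonneg (mul_nonneg (sub_nonneg.2 hvh) (sub_nonneg.2 hvh)) hv0]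

lemma ival4 (u : ℝ) (hu : ((27:ℝ)/10) ≤ u) (huh : u ≤ ((27:ℝ)/10) + ((5:ℝ)/4)) :
    (57/250)*((1/2+u/4)*Real.exp (-(u/4))) + (1693/2000)*((1/2+2*u)*Real.exp (-(2*u)))
      ≤ 173896/10^7 + (5198603/10^7)*Real.exp (-(2404492/10^7*u)) := by
  have hE1 : Real.exp (-(((27:ℝ)/40))) ≤ ((15911147499:ℝ)/31250000000) := by
    have hz : -(((27:ℝ)/40)) = -(((0:ℕ):ℝ) + ((27:ℝ)/40)) := by norm_num
    rw [hz]
    exact expNegUB 0 ((27:ℝ)/40) ((15911147499:ℝ)/31250000000) (by norm_num) (by norm_num) (by norm_num)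
  have hE2 : Real.exp (-(((27:ℝ)/5))) ≤ ((1129145249:ℝ)/250000000000) := by
    have hz : -(((27:ℝ)/5)) = -(((5:ℕ):ℝ) + ((2:ℝ)/5)) := by norm_num
    rw [hz]
    exact expNegUB 5 ((2:ℝ)/5) ((1129145249:ℝ)/250000000000) (by norm_num) (by norm_num) (by norm_num)
  have hE3b : ((123785051:ℝ)/320000000) ≤ Real.exp (-(((47488717:ℝ)/50000000))) := by
    have hz : -(((47488717:ℝ)/50000000)) = -(((0:ℕ):ℝ) + ((47488717:ℝ)/50000000)) := by norm_num
    rw [hz]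
    exact expNegLB 0 ((47488717:ℝ)/50000000) ((123785051:ℝ)/320000000) (by norm_num) (by norm_num) (by norm_num) (by norm_num)
  apply gstep ((27:ℝ)/10) ((5:ℝ)/4) u ((15911147499:ℝ)/31250000000) ((1129145249:ℝ)/250000000000) ((123785051:ℝ)/320000000) (by norm_num) (by norm_num) hu huh
  · have hz : (((27:ℝ)/10):ℝ)/4 = ((27:ℝ)/40) := by norm_num
    rw [hz]; exact hE1
  · have hz : (2:ℝ)*((27:ℝ)/10) = ((27:ℝ)/5) := by norm_num
    rw [hz]; exact hE2
  · have hz : ((2404492:ℝ)/10^7) * (((27:ℝ)/10) + ((5:ℝ)/4)) = ((47488717:ℝ)/50000000) := by norm_num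
    rw [hz]; exact hE3b
  · norm_num
  · intro v hv0 hvh
    nlinarith [mul_nonneg hv0 hv0, mul_nonneg (mul_nonneg hv0 hv0) hv0,
      mul_nonneg (sub_nonneg.2 hvh) hv0, mul_nonneg (mul_nonneg (sub_nonneg.2 hvh) hv0) hv0,
      mul_nonneg (mul_nonneg (sub_nonneg.2 hvh) (sub_nonneg.2 hvh)) hv0]

lemma ival5 (u : ℝ) (hu : ((79:ℝ)/20) ≤ u) (huh : u ≤ ((79:ℝ)/20) + (2:ℝ)) :
    (57/250)*((1/2+u/4)*Real.exp (-(u/4))) + (1693/2000)*((1/2+2*u)*Real.exp (-(2*u)))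
      ≤ 173896/10^7 + (5198603/10^7)*Real.exp (-(2404492/10^7*u)) := by
  have hE1 : Real.exp (-(((79:ℝ)/80))) ≤ ((582047321:ℝ)/1562500000) := by
    have hz : -(((79:ℝ)/80)) = -(((0:ℕ):ℝ) + ((79:ℝ)/80)) := by norm_num
    rw [hz]
    exact expNegUB 0 ((79:ℝ)/80) ((582047321:ℝ)/1562500000) (by norm_num) (by norm_num) (by norm_num)
  have hE2 : Real.exp (-(((79:ℝ)/10))) ≤ ((370745327:ℝ)/1000000000000) := by
    have hz : -(((79:ℝ)/10)) = -(((7:ℕ):ℝ) + ((9:ℝ)/10)) := by norm_num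
    rw [hz]
    exact expNegUB 7 ((9:ℝ)/10) ((370745327:ℝ)/1000000000000) (by norm_num) (by norm_num) (by norm_num)
  have hE3b : ((47829596669:ℝ)/200000000000) ≤ Real.exp (-(((71533637:ℝ)/50000000))) := by
    have hz : -(((71533637:ℝ)/50000000)) = -(((1:ℕ):ℝ) + ((21533637:ℝ)/50000000)) := by norm_num
    rw [hz]
    exact expNegLB 1 ((21533637:ℝ)/50000000) ((47829596669:ℝ)/200000000000) (by norm_num) (by norm_num) (by norm_num) (by norm_num)
  apply gstep ((79:ℝ)/20) (2:ℝ) u ((582047321:ℝ)/1562500000) ((370745327:ℝ)/1000000000000) ((47829596669:ℝ)/200000000000) (by norm_num) (by norm_num) hu huh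
  · have hz : (((79:ℝ)/20):ℝ)/4 = ((79:ℝ)/80) := by norm_num
    rw [hz]; exact hE1
  · have hz : (2:ℝ)*((79:ℝ)/20) = ((79:ℝ)/10) := by norm_num
    rw [hz]; exact hE2
  · have hz : ((2404492:ℝ)/10^7) * (((79:ℝ)/20) + (2:ℝ)) = ((71533637:ℝ)/50000000) := by norm_num
    rw [hz]; exact hE3b
  · norm_num
  · intro v hv0 hvh
    nlinarith [mul_nonneg hv0 hv0, mul_nonneg (mul_nonneg hv0 hv0) hv0,
      mul_nonneg (sub_nonneg.2 hvh) hv0, mul_nonneg (mul_nonneg (sub_nonneg.2 hvh) hv0) hv0,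
      mul_nonneg (mul_nonneg (sub_nonneg.2 hvh) (sub_nonneg.2 hvh)) hv0]

lemma ival6 (u : ℝ) (hu : ((119:ℝ)/20) ≤ u) (huh : u ≤ ((119:ℝ)/20) + (3:ℝ)) :
    (57/250)*((1/2+u/4)*Real.exp (-(u/4))) + (1693/2000)*((1/2+2*u)*Real.exp (-(2*u)))
      ≤ 173896/10^7 + (5198603/10^7)*Real.exp (-(2404492/10^7*u)) := by
  have hE1 : Real.exp (-(((119:ℝ)/80))) ≤ ((28242100459:ℝ)/125000000000) := by
    have hz : -(((119:ℝ)/80)) = -(((1:ℕ):ℝ) + ((39:ℝ)/80)) := by norm_num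
    rw [hz]
    exact expNegUB 1 ((39:ℝ)/80) ((28242100459:ℝ)/125000000000) (by norm_num) (by norm_num) (by norm_num)
  have hE2 : Real.exp (-(((119:ℝ)/10))) ≤ ((3395219:ℝ)/500000000000) := by
    have hz : -(((119:ℝ)/10)) = -(((11:ℕ):ℝ) + ((9:ℝ)/10)) := by norm_num
    rw [hz]
    exact expNegUB 11 ((9:ℝ)/10) ((3395219:ℝ)/500000000000) (by norm_num) (by norm_num) (by norm_num)
  have hE3b : ((116249057729:ℝ)/1000000000000) ≤ Real.exp (-(((107601017:ℝ)/50000000))) := by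
    have hz : -(((107601017:ℝ)/50000000)) = -(((2:ℕ):ℝ) + ((7601017:ℝ)/50000000)) := by norm_num
    rw [hz]
    exact expNegLB 2 ((7601017:ℝ)/50000000) ((116249057729:ℝ)/1000000000000) (by norm_num) (by norm_num) (by norm_num) (by norm_num)
  apply gstep ((119:ℝ)/20) (3:ℝ) u ((28242100459:ℝ)/125000000000) ((3395219:ℝ)/500000000000) ((116249057729:ℝ)/1000000000000) (by norm_num) (by norm_num) hu huh
  · have hz : (((119:ℝ)/20):ℝ)/4 = ((119:ℝ)/80) := by norm_num
    rw [hz]; exact hE1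
  · have hz : (2:ℝ)*((119:ℝ)/20) = ((119:ℝ)/10) := by norm_num
    rw [hz]; exact hE2
  · have hz : ((2404492:ℝ)/10^7) * (((119:ℝ)/20) + (3:ℝ)) = ((107601017:ℝ)/50000000) := by norm_num
    rw [hz]; exact hE3b
  · norm_num
  · intro v hv0 hvh
    nlinarith [mul_nonneg hv0 hv0, mul_nonneg (mul_nonneg hv0 hv0) hv0,
      mul_nonneg (sub_nonneg.2 hvh) hv0, mul_nonneg (mul_nonneg (sub_nonneg.2 hvh) hv0) hv0,
      mul_nonneg (mul_nonneg (sub_nonneg.2 hvh) (sub_nonneg.2 hvh)) hv0]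

lemma ival7 (u : ℝ) (hu : ((179:ℝ)/20) ≤ u) (huh : u ≤ ((179:ℝ)/20) + (2:ℝ)) :
    (57/250)*((1/2+u/4)*Real.exp (-(u/4))) + (1693/2000)*((1/2+2*u)*Real.exp (-(2*u)))
      ≤ 173896/10^7 + (5198603/10^7)*Real.exp (-(2404492/10^7*u)) := by
  have hE1 : Real.exp (-(((179:ℝ)/80))) ≤ ((21344996727:ℝ)/200000000000) := by
    have hz : -(((179:ℝ)/80)) = -(((2:ℕ):ℝ) + ((19:ℝ)/80)) := by norm_num
    rw [hz]
    exact expNegUB 2 ((19:ℝ)/80) ((21344996727:ℝ)/200000000000) (by norm_num) (by norm_num) (by norm_num)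
  have hE2 : Real.exp (-(((179:ℝ)/10))) ≤ ((263:ℝ)/15625000000) := by
    have hz : -(((179:ℝ)/10)) = -(((17:ℕ):ℝ) + ((9:ℝ)/10)) := by norm_num
    rw [hz]
    exact expNegUB 17 ((9:ℝ)/10) ((263:ℝ)/15625000000) (by norm_num) (by norm_num) (by norm_num)
  have hE3b : ((17967097361:ℝ)/250000000000) ≤ Real.exp (-(((131645937:ℝ)/50000000))) := by
    have hz : -(((131645937:ℝ)/50000000)) = -(((2:ℕ):ℝ) + ((31645937:ℝ)/50000000)) := by norm_num
    rw [hz]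
    exact expNegLB 2 ((31645937:ℝ)/50000000) ((17967097361:ℝ)/250000000000) (by norm_num) (by norm_num) (by norm_num) (by norm_num)
  apply gstep ((179:ℝ)/20) (2:ℝ) u ((21344996727:ℝ)/200000000000) ((263:ℝ)/15625000000) ((17967097361:ℝ)/250000000000) (by norm_num) (by norm_num) hu huh
  · have hz : (((179:ℝ)/20):ℝ)/4 = ((179:ℝ)/80) := by norm_num
    rw [hz]; exact hE1
  · have hz : (2:ℝ)*((179:ℝ)/20) = ((179:ℝ)/10) := by norm_num
    rw [hz]; exact hE2
  · have hz : ((2404492:ℝ)/10^7) * (((179:ℝ)/20) + (2:ℝ)) = ((131645937:ℝ)/50000000) := by norm_num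
    rw [hz]; exact hE3b
  · norm_num
  · intro v hv0 hvh
    nlinarith [mul_nonneg hv0 hv0, mul_nonneg (mul_nonneg hv0 hv0) hv0,
      mul_nonneg (sub_nonneg.2 hvh) hv0, mul_nonneg (mul_nonneg (sub_nonneg.2 hvh) hv0) hv0,
      mul_nonneg (mul_nonneg (sub_nonneg.2 hvh) (sub_nonneg.2 hvh)) hv0]

lemma ival8 (u : ℝ) (hu : ((219:ℝ)/20) ≤ u) (huh : u ≤ ((219:ℝ)/20) + (2:ℝ)) :
    (57/250)*((1/2+u/4)*Real.exp (-(u/4))) + (1693/2000)*((1/2+2*u)*Real.exp (-(2*u)))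
      ≤ 173896/10^7 + (5198603/10^7)*Real.exp (-(2404492/10^7*u)) := by
  have hE1 : Real.exp (-(((219:ℝ)/80))) ≤ ((64732047867:ℝ)/1000000000000) := by
    have hz : -(((219:ℝ)/80)) = -(((2:ℕ):ℝ) + ((59:ℝ)/80)) := by norm_num
    rw [hz]
    exact expNegUB 2 ((59:ℝ)/80) ((64732047867:ℝ)/1000000000000) (by norm_num) (by norm_num) (by norm_num)
  have hE2 : Real.exp (-(((219:ℝ)/10))) ≤ ((309:ℝ)/1000000000000) := by
    have hz : -(((219:ℝ)/10)) = -(((21:ℕ):ℝ) + ((9:ℝ)/10)) := by norm_num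
    rw [hz]
    exact expNegUB 21 ((9:ℝ)/10) ((309:ℝ)/1000000000000) (by norm_num) (by norm_num) (by norm_num)
  have hE3b : ((555387897:ℝ)/12500000000) ≤ Real.exp (-(((155690857:ℝ)/50000000))) := by
    have hz : -(((155690857:ℝ)/50000000)) = -(((3:ℕ):ℝ) + ((5690857:ℝ)/50000000)) := by norm_num
    rw [hz]
    exact expNegLB 3 ((5690857:ℝ)/50000000) ((555387897:ℝ)/12500000000) (by norm_num) (by norm_num) (by norm_num) (by norm_num)
  apply gstep ((219:ℝ)/20) (2:ℝ) u ((64732047867:ℝ)/1000000000000) ((309:ℝ)/1000000000000) ((555387897:ℝ)/12500000000) (by norm_num) (by norm_num) hu huh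
  · have hz : (((219:ℝ)/20):ℝ)/4 = ((219:ℝ)/80) := by norm_num
    rw [hz]; exact hE1
  · have hz : (2:ℝ)*((219:ℝ)/20) = ((219:ℝ)/10) := by norm_num
    rw [hz]; exact hE2
  · have hz : ((2404492:ℝ)/10^7) * (((219:ℝ)/20) + (2:ℝ)) = ((155690857:ℝ)/50000000) := by norm_num
    rw [hz]; exact hE3b
  · norm_num
  · intro v hv0 hvh
    nlinarith [mul_nonneg hv0 hv0, mul_nonneg (mul_nonneg hv0 hv0) hv0,
      mul_nonneg (sub_nonneg.2 hvh) hv0, mul_nonneg (mul_nonneg (sub_nonneg.2 hvh) hv0) hv0,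
      mul_nonneg (mul_nonneg (sub_nonneg.2 hvh) (sub_nonneg.2 hvh)) hv0]

lemma ival9 (u : ℝ) (hu : ((259:ℝ)/20) ≤ u) (huh : u ≤ ((259:ℝ)/20) + ((5:ℝ)/2)) :
    (57/250)*((1/2+u/4)*Real.exp (-(u/4))) + (1693/2000)*((1/2+2*u)*Real.exp (-(2*u)))
      ≤ 173896/10^7 + (5198603/10^7)*Real.exp (-(2404492/10^7*u)) := by
  have hE1 : Real.exp (-(((259:ℝ)/80))) ≤ ((39261927341:ℝ)/1000000000000) := by
    have hz : -(((259:ℝ)/80)) = -(((3:ℕ):ℝ) + ((19:ℝ)/80)) := by norm_num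
    rw [hz]
    exact expNegUB 3 ((19:ℝ)/80) ((39261927341:ℝ)/1000000000000) (by norm_num) (by norm_num) (by norm_num)
  have hE2 : Real.exp (-(((259:ℝ)/10))) ≤ ((3:ℝ)/500000000000) := by
    have hz : -(((259:ℝ)/10)) = -(((25:ℕ):ℝ) + ((9:ℝ)/10)) := by norm_num
    rw [hz]
    exact expNegUB 25 ((9:ℝ)/10) ((3:ℝ)/500000000000) (by norm_num) (by norm_num) (by norm_num)
  have hE3b : ((12178449137:ℝ)/500000000000) ≤ Real.exp (-(((185747007:ℝ)/50000000))) := by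
    have hz : -(((185747007:ℝ)/50000000)) = -(((3:ℕ):ℝ) + ((35747007:ℝ)/50000000)) := by norm_num
    rw [hz]
    exact expNegLB 3 ((35747007:ℝ)/50000000) ((12178449137:ℝ)/500000000000) (by norm_num) (by norm_num) (by norm_num) (by norm_num)
  apply gstep ((259:ℝ)/20) ((5:ℝ)/2) u ((39261927341:ℝ)/1000000000000) ((3:ℝ)/500000000000) ((12178449137:ℝ)/500000000000) (by norm_num) (by norm_num) hu huh
  · have hz : (((259:ℝ)/20):ℝ)/4 = ((259:ℝ)/80) := by norm_num
    rw [hz]; exact hE1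
  · have hz : (2:ℝ)*((259:ℝ)/20) = ((259:ℝ)/10) := by norm_num
    rw [hz]; exact hE2
  · have hz : ((2404492:ℝ)/10^7) * (((259:ℝ)/20) + ((5:ℝ)/2)) = ((185747007:ℝ)/50000000) := by norm_num
    rw [hz]; exact hE3b
  · norm_num
  · intro v hv0 hvh
    nlinarith [mul_nonneg hv0 hv0, mul_nonneg (mul_nonneg hv0 hv0) hv0,
      mul_nonneg (sub_nonneg.2 hvh) hv0, mul_nonneg (mul_nonneg (sub_nonneg.2 hvh) hv0) hv0,
      mul_nonneg (mul_nonneg (sub_nonneg.2 hvh) (sub_nonneg.2 hvh)) hv0]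

lemma ival10 (u : ℝ) (hu : ((309:ℝ)/20) ≤ u) (huh : u ≤ ((309:ℝ)/20) + (3:ℝ)) :
    (57/250)*((1/2+u/4)*Real.exp (-(u/4))) + (1693/2000)*((1/2+2*u)*Real.exp (-(2*u)))
      ≤ 173896/10^7 + (5198603/10^7)*Real.exp (-(2404492/10^7*u)) := by
  have hE1 : Real.exp (-(((309:ℝ)/80))) ≤ ((21015469749:ℝ)/1000000000000) := by
    have hz : -(((309:ℝ)/80)) = -(((3:ℕ):ℝ) + ((69:ℝ)/80)) := by norm_num
    rw [hz]
    exact expNegUB 3 ((69:ℝ)/80) ((21015469749:ℝ)/1000000000000) (by norm_num) (by norm_num) (by norm_num)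
  have hE2 : Real.exp (-(((309:ℝ)/10))) ≤ ((1:ℝ)/1000000000000) := by
    have hz : -(((309:ℝ)/10)) = -(((30:ℕ):ℝ) + ((9:ℝ)/10)) := by norm_num
    rw [hz]
    exact expNegUB 30 ((9:ℝ)/10) ((1:ℝ)/1000000000000) (by norm_num) (by norm_num) (by norm_num)
  have hE3b : ((11839809469:ℝ)/1000000000000) ≤ Real.exp (-(((221814387:ℝ)/50000000))) := by
    have hz : -(((221814387:ℝ)/50000000)) = -(((4:ℕ):ℝ) + ((21814387:ℝ)/50000000)) := by norm_num
    rw [hz]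
    exact expNegLB 4 ((21814387:ℝ)/50000000) ((11839809469:ℝ)/1000000000000) (by norm_num) (by norm_num) (by norm_num) (by norm_num)
  apply gstep ((309:ℝ)/20) (3:ℝ) u ((21015469749:ℝ)/1000000000000) ((1:ℝ)/1000000000000) ((11839809469:ℝ)/1000000000000) (by norm_num) (by norm_num) hu huh
  · have hz : (((309:ℝ)/20):ℝ)/4 = ((309:ℝ)/80) := by norm_num
    rw [hz]; exact hE1
  · have hz : (2:ℝ)*((309:ℝ)/20) = ((309:ℝ)/10) := by norm_num
    rw [hz]; exact hE2
  · have hz : ((2404492:ℝ)/10^7) * (((309:ℝ)/20) + (3:ℝ)) = ((221814387:ℝ)/50000000) := by norm_num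
    rw [hz]; exact hE3b
  · norm_num
  · intro v hv0 hvh
    nlinarith [mul_nonneg hv0 hv0, mul_nonneg (mul_nonneg hv0 hv0) hv0,
      mul_nonneg (sub_nonneg.2 hvh) hv0, mul_nonneg (mul_nonneg (sub_nonneg.2 hvh) hv0) hv0,
      mul_nonneg (mul_nonneg (sub_nonneg.2 hvh) (sub_nonneg.2 hvh)) hv0]

lemma ival11 (u : ℝ) (hu : ((369:ℝ)/20) ≤ u) (huh : u ≤ ((369:ℝ)/20) + (3:ℝ)) :
    (57/250)*((1/2+u/4)*Real.exp (-(u/4))) + (1693/2000)*((1/2+2*u)*Real.exp (-(2*u)))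
      ≤ 173896/10^7 + (5198603/10^7)*Real.exp (-(2404492/10^7*u)) := by
  have hE1 : Real.exp (-(((369:ℝ)/80))) ≤ ((9926972673:ℝ)/1000000000000) := by
    have hz : -(((369:ℝ)/80)) = -(((4:ℕ):ℝ) + ((49:ℝ)/80)) := by norm_num
    rw [hz]
    exact expNegUB 4 ((49:ℝ)/80) ((9926972673:ℝ)/1000000000000) (by norm_num) (by norm_num) (by norm_num)
  have hE2 : Real.exp (-(((369:ℝ)/10))) ≤ ((1:ℝ)/1000000000000) := by
    have hz : -(((369:ℝ)/10)) = -(((36:ℕ):ℝ) + ((9:ℝ)/10)) := by norm_num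
    rw [hz]
    exact expNegUB 36 ((9:ℝ)/10) ((1:ℝ)/1000000000000) (by norm_num) (by norm_num) (by norm_num)
  have hE3b : ((5755292917:ℝ)/1000000000000) ≤ Real.exp (-(((257881767:ℝ)/50000000))) := by
    have hz : -(((257881767:ℝ)/50000000)) = -(((5:ℕ):ℝ) + ((7881767:ℝ)/50000000)) := by norm_num
    rw [hz]
    exact expNegLB 5 ((7881767:ℝ)/50000000) ((5755292917:ℝ)/1000000000000) (by norm_num) (by norm_num) (by norm_num) (by norm_num)
  apply gstep ((369:ℝ)/20) (3:ℝ) u ((9926972673:ℝ)/1000000000000) ((1:ℝ)/1000000000000) ((5755292917:ℝ)/1000000000000) (by norm_num) (by norm_num) hu huh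
  · have hz : (((369:ℝ)/20):ℝ)/4 = ((369:ℝ)/80) := by norm_num
    rw [hz]; exact hE1
  · have hz : (2:ℝ)*((369:ℝ)/20) = ((369:ℝ)/10) := by norm_num
    rw [hz]; exact hE2
  · have hz : ((2404492:ℝ)/10^7) * (((369:ℝ)/20) + (3:ℝ)) = ((257881767:ℝ)/50000000) := by norm_num
    rw [hz]; exact hE3b
  · norm_num
  · intro v hv0 hvh
    nlinarith [mul_nonneg hv0 hv0, mul_nonneg (mul_nonneg hv0 hv0) hv0,
      mul_nonneg (sub_nonneg.2 hvh) hv0, mul_nonneg (mul_nonneg (sub_nonneg.2 hvh) hv0) hv0,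
      mul_nonneg (mul_nonneg (sub_nonneg.2 hvh) (sub_nonneg.2 hvh)) hv0]

lemma ival12 (u : ℝ) (hu : ((429:ℝ)/20) ≤ u) (huh : u ≤ ((429:ℝ)/20) + (3:ℝ)) :
    (57/250)*((1/2+u/4)*Real.exp (-(u/4))) + (1693/2000)*((1/2+2*u)*Real.exp (-(2*u)))
      ≤ 173896/10^7 + (5198603/10^7)*Real.exp (-(2404492/10^7*u)) := by
  have hE1 : Real.exp (-(((429:ℝ)/80))) ≤ ((4689168547:ℝ)/1000000000000) := by
    have hz : -(((429:ℝ)/80)) = -(((5:ℕ):ℝ) + ((29:ℝ)/80)) := by norm_num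
    rw [hz]
    exact expNegUB 5 ((29:ℝ)/80) ((4689168547:ℝ)/1000000000000) (by norm_num) (by norm_num) (by norm_num)
  have hE2 : Real.exp (-(((429:ℝ)/10))) ≤ ((1:ℝ)/1000000000000) := by
    have hz : -(((429:ℝ)/10)) = -(((42:ℕ):ℝ) + ((9:ℝ)/10)) := by norm_num
    rw [hz]
    exact expNegUB 42 ((9:ℝ)/10) ((1:ℝ)/1000000000000) (by norm_num) (by norm_num) (by norm_num)
  have hE3b : ((2797628999:ℝ)/1000000000000) ≤ Real.exp (-(((293949147:ℝ)/50000000))) := by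
    have hz : -(((293949147:ℝ)/50000000)) = -(((5:ℕ):ℝ) + ((43949147:ℝ)/50000000)) := by norm_num
    rw [hz]
    exact expNegLB 5 ((43949147:ℝ)/50000000) ((2797628999:ℝ)/1000000000000) (by norm_num) (by norm_num) (by norm_num) (by norm_num)
  apply gstep ((429:ℝ)/20) (3:ℝ) u ((4689168547:ℝ)/1000000000000) ((1:ℝ)/1000000000000) ((2797628999:ℝ)/1000000000000) (by norm_num) (by norm_num) hu huh
  · have hz : (((429:ℝ)/20):ℝ)/4 = ((429:ℝ)/80) := by norm_num
    rw [hz]; exact hE1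
  · have hz : (2:ℝ)*((429:ℝ)/20) = ((429:ℝ)/10) := by norm_num
    rw [hz]; exact hE2
  · have hz : ((2404492:ℝ)/10^7) * (((429:ℝ)/20) + (3:ℝ)) = ((293949147:ℝ)/50000000) := by norm_num
    rw [hz]; exact hE3b
  · norm_num
  · intro v hv0 hvh
    nlinarith [mul_nonneg hv0 hv0, mul_nonneg (mul_nonneg hv0 hv0) hv0,
      mul_nonneg (sub_nonneg.2 hvh) hv0, mul_nonneg (mul_nonneg (sub_nonneg.2 hvh) hv0) hv0,
      mul_nonneg (mul_nonneg (sub_nonneg.2 hvh) (sub_nonneg.2 hvh)) hv0]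

lemma ival13 (u : ℝ) (hu : ((489:ℝ)/20) ≤ u) (huh : u ≤ ((489:ℝ)/20) + ((3:ℝ)/2)) :
    (57/250)*((1/2+u/4)*Real.exp (-(u/4))) + (1693/2000)*((1/2+2*u)*Real.exp (-(2*u)))
      ≤ 173896/10^7 + (5198603/10^7)*Real.exp (-(2404492/10^7*u)) := by
  have hE1 : Real.exp (-(((489:ℝ)/80))) ≤ ((221500637:ℝ)/100000000000) := by
    have hz : -(((489:ℝ)/80)) = -(((6:ℕ):ℝ) + ((9:ℝ)/80)) := by norm_num
    rw [hz]
    exact expNegUB 6 ((9:ℝ)/80) ((221500637:ℝ)/100000000000) (by norm_num) (by norm_num) (by norm_num)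
  have hE2 : Real.exp (-(((489:ℝ)/10))) ≤ ((1:ℝ)/1000000000000) := by
    have hz : -(((489:ℝ)/10)) = -(((48:ℕ):ℝ) + ((9:ℝ)/10)) := by norm_num
    rw [hz]
    exact expNegUB 48 ((9:ℝ)/10) ((1:ℝ)/1000000000000) (by norm_num) (by norm_num) (by norm_num)
  have hE3b : ((121907809:ℝ)/62500000000) ≤ Real.exp (-(((311982837:ℝ)/50000000))) := by
    have hz : -(((311982837:ℝ)/50000000)) = -(((6:ℕ):ℝ) + ((11982837:ℝ)/50000000)) := by norm_num
    rw [hz]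
    exact expNegLB 6 ((11982837:ℝ)/50000000) ((121907809:ℝ)/62500000000) (by norm_num) (by norm_num) (by norm_num) (by norm_num)
  apply gstep ((489:ℝ)/20) ((3:ℝ)/2) u ((221500637:ℝ)/100000000000) ((1:ℝ)/1000000000000) ((121907809:ℝ)/62500000000) (by norm_num) (by norm_num) hu huh
  · have hz : (((489:ℝ)/20):ℝ)/4 = ((489:ℝ)/80) := by norm_num
    rw [hz]; exact hE1
  · have hz : (2:ℝ)*((489:ℝ)/20) = ((489:ℝ)/10) := by norm_num
    rw [hz]; exact hE2
  · have hz : ((2404492:ℝ)/10^7) * (((489:ℝ)/20) + ((3:ℝ)/2)) = ((311982837:ℝ)/50000000) := by norm_num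
    rw [hz]; exact hE3b
  · norm_num
  · intro v hv0 hvh
    nlinarith [mul_nonneg hv0 hv0, mul_nonneg (mul_nonneg hv0 hv0) hv0,
      mul_nonneg (sub_nonneg.2 hvh) hv0, mul_nonneg (mul_nonneg (sub_nonneg.2 hvh) hv0) hv0,
      mul_nonneg (mul_nonneg (sub_nonneg.2 hvh) (sub_nonneg.2 hvh)) hv0]

lemma ival14 (u : ℝ) (hu : ((519:ℝ)/20) ≤ u) (huh : u ≤ ((519:ℝ)/20) + ((1:ℝ)/20)) :
    (57/250)*((1/2+u/4)*Real.exp (-(u/4))) + (1693/2000)*((1/2+2*u)*Real.exp (-(2*u)))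
      ≤ 173896/10^7 + (5198603/10^7)*Real.exp (-(2404492/10^7*u)) := by
  have hE1 : Real.exp (-(((519:ℝ)/80))) ≤ ((1522350209:ℝ)/1000000000000) := by
    have hz : -(((519:ℝ)/80)) = -(((6:ℕ):ℝ) + ((39:ℝ)/80)) := by norm_num
    rw [hz]
    exact expNegUB 6 ((39:ℝ)/80) ((1522350209:ℝ)/1000000000000) (by norm_num) (by norm_num) (by norm_num)
  have hE2 : Real.exp (-(((519:ℝ)/10))) ≤ ((1:ℝ)/1000000000000) := by
    have hz : -(((519:ℝ)/10)) = -(((51:ℕ):ℝ) + ((9:ℝ)/10)) := by norm_num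
    rw [hz]
    exact expNegUB 51 ((9:ℝ)/10) ((1:ℝ)/1000000000000) (by norm_num) (by norm_num) (by norm_num)
  have hE3b : ((1927215237:ℝ)/1000000000000) ≤ Real.exp (-(((7814599:ℝ)/1250000))) := by
    have hz : -(((7814599:ℝ)/1250000)) = -(((6:ℕ):ℝ) + ((314599:ℝ)/1250000)) := by norm_num
    rw [hz]
    exact expNegLB 6 ((314599:ℝ)/1250000) ((1927215237:ℝ)/1000000000000) (by norm_num) (by norm_num) (by norm_num) (by norm_num)
  apply gstep ((519:ℝ)/20) ((1:ℝ)/20) u ((1522350209:ℝ)/1000000000000) ((1:ℝ)/1000000000000) ((1927215237:ℝ)/1000000000000) (by norm_num) (by norm_num) hu huh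
  · have hz : (((519:ℝ)/20):ℝ)/4 = ((519:ℝ)/80) := by norm_num
    rw [hz]; exact hE1
  · have hz : (2:ℝ)*((519:ℝ)/20) = ((519:ℝ)/10) := by norm_num
    rw [hz]; exact hE2
  · have hz : ((2404492:ℝ)/10^7) * (((519:ℝ)/20) + ((1:ℝ)/20)) = ((7814599:ℝ)/1250000) := by norm_num
    rw [hz]; exact hE3b
  · norm_num
  · intro v hv0 hvh
    nlinarith [mul_nonneg hv0 hv0, mul_nonneg (mul_nonneg hv0 hv0) hv0,
      mul_nonneg (sub_nonneg.2 hvh) hv0, mul_nonneg (mul_nonneg (sub_nonneg.2 hvh) hv0) hv0,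
      mul_nonneg (mul_nonneg (sub_nonneg.2 hvh) (sub_nonneg.2 hvh)) hv0]

lemma keyIneq (u : ℝ) (hu : 1 ≤ u) :
    (57/250)*((1/2+u/4)*Real.exp (-(u/4))) + (1693/2000)*((1/2+2*u)*Real.exp (-(2*u)))
      ≤ 173896/10^7 + (5198603/10^7)*Real.exp (-(2404492/10^7*u)) := by
  by_cases hcase0 : u ≤ ((23:ℝ)/20)
  · exact ival0 u (by linarith) (by linarith)
  have hprev1 : (((23:ℝ)/20):ℝ) ≤ u := by linarith
  by_cases hcase1 : u ≤ ((29:ℝ)/20)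
  · exact ival1 u (by linarith) (by linarith)
  have hprev2 : (((29:ℝ)/20):ℝ) ≤ u := by linarith
  by_cases hcase2 : u ≤ ((39:ℝ)/20)
  · exact ival2 u (by linarith) (by linarith)
  have hprev3 : (((39:ℝ)/20):ℝ) ≤ u := by linarith
  by_cases hcase3 : u ≤ ((27:ℝ)/10)
  · exact ival3 u (by linarith) (by linarith)
  have hprev4 : (((27:ℝ)/10):ℝ) ≤ u := by linarith
  by_cases hcase4 : u ≤ ((79:ℝ)/20)
  · exact ival4 u (by linarith) (by linarith)
  have hprev5 : (((79:ℝ)/20):ℝ) ≤ u := by linarith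
  by_cases hcase5 : u ≤ ((119:ℝ)/20)
  · exact ival5 u (by linarith) (by linarith)
  have hprev6 : (((119:ℝ)/20):ℝ) ≤ u := by linarith
  by_cases hcase6 : u ≤ ((179:ℝ)/20)
  · exact ival6 u (by linarith) (by linarith)
  have hprev7 : (((179:ℝ)/20):ℝ) ≤ u := by linarith
  by_cases hcase7 : u ≤ ((219:ℝ)/20)
  · exact ival7 u (by linarith) (by linarith)
  have hprev8 : (((219:ℝ)/20):ℝ) ≤ u := by linarith
  by_cases hcase8 : u ≤ ((259:ℝ)/20)
  · exact ival8 u (by linarith) (by linarith)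
  have hprev9 : (((259:ℝ)/20):ℝ) ≤ u := by linarith
  by_cases hcase9 : u ≤ ((309:ℝ)/20)
  · exact ival9 u (by linarith) (by linarith)
  have hprev10 : (((309:ℝ)/20):ℝ) ≤ u := by linarith
  by_cases hcase10 : u ≤ ((369:ℝ)/20)
  · exact ival10 u (by linarith) (by linarith)
  have hprev11 : (((369:ℝ)/20):ℝ) ≤ u := by linarith
  by_cases hcase11 : u ≤ ((429:ℝ)/20)
  · exact ival11 u (by linarith) (by linarith)
  have hprev12 : (((429:ℝ)/20):ℝ) ≤ u := by linarith
  by_cases hcase12 : u ≤ ((489:ℝ)/20)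
  · exact ival12 u (by linarith) (by linarith)
  have hprev13 : (((489:ℝ)/20):ℝ) ≤ u := by linarith
  by_cases hcase13 : u ≤ ((519:ℝ)/20)
  · exact ival13 u (by linarith) (by linarith)
  have hprev14 : (((519:ℝ)/20):ℝ) ≤ u := by linarith
  by_cases hcase14 : u ≤ (26:ℝ)
  · exact ival14 u (by linarith) (by linarith)
  have hprev15 : ((26:ℝ):ℝ) ≤ u := by linarith
  -- tail: u ≥ 26
  have h26 : (26:ℝ) ≤ u := by linarith
  have m1 : (1/2+u/4)*Real.exp (-(u/4)) ≤ (1/2+13/2)*Real.exp (-(13/2:ℝ)) := by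
    have := L3 (13/2) (u/4) (by norm_num) (by linarith)
    linarith [this]
  have m2 : (1/2+2*u)*Real.exp (-(2*u)) ≤ (1/2+52)*Real.exp (-(52:ℝ)) := by
    have := L3 52 (2*u) (by norm_num) (by linarith)
    linarith [this]

  have hA : Real.exp (-(((13:ℝ)/2))) ≤ ((187929911:ℝ)/125000000000) := by
    have hz : -(((13:ℝ)/2)) = -(((6:ℕ):ℝ) + ((1:ℝ)/2)) := by norm_num
    rw [hz]
    exact expNegUB 6 ((1:ℝ)/2) ((187929911:ℝ)/125000000000) (by norm_num) (by norm_num) (by norm_num)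
  have hB : Real.exp (-((52:ℝ))) ≤ ((1:ℝ)/1000000000000) := by
    have hz : -((52:ℝ)) = -(((52:ℕ):ℝ) + (0:ℝ)) := by norm_num
    rw [hz]
    exact expNegUB 52 (0:ℝ) ((1:ℝ)/1000000000000) (by norm_num) (by norm_num) (by norm_num)
  have hexpnn : (0:ℝ) ≤ Real.exp (-(2404492/10^7*u)) := (Real.exp_pos _).le
  nlinarith [m1, m2, hA, hB, hexpnn]

lemma P1u (u : ℝ) (hu : 0 ≤ u) :
    (6 * Real.log 2 / 8) * (1 - Real.exp (-(u / (6 * Real.log 2))))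
      + (57/250) * (u/4 * Real.exp (-(u/4)) - (1 - Real.exp (-(u/4)))/2)
      + (1693/2000) * (2*u * Real.exp (-(2*u)) - (1 - Real.exp (-(2*u)))/2)
    ≤ u := by
  have hlog2 : 0 < Real.log 2 := Real.log_pos (by norm_num)
  have h0 : 1 - Real.exp (-(u / (6 * Real.log 2))) ≤ u / (6 * Real.log 2) := by
    have := Real.add_one_le_exp (-(u / (6 * Real.log 2))); linarith
  have h0' : (6 * Real.log 2 / 8) * (1 - Real.exp (-(u / (6 * Real.log 2)))) ≤ u/8 := by
    have hC : 0 ≤ 6 * Real.log 2 / 8 := by positivity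
    have := mul_le_mul_of_nonneg_left h0 hC
    have heq : (6 * Real.log 2 / 8) * (u / (6 * Real.log 2)) = u/8 := by
      field_simp
    linarith [this, heq.le, heq.ge]
  have h1 := L2 (u/4) (by linarith)
  have h2 := L2 (2*u) (by linarith)
  nlinarith [h1, h2, h0']

lemma P2u (u : ℝ) (hu : 1 ≤ u) :
    (6 * Real.log 2 / 8) * (1 - Real.exp (-(u / (6 * Real.log 2))))
      + (57/250) * (u/4 * Real.exp (-(u/4)) - (1 - Real.exp (-(u/4)))/2)
      + (1693/2000) * (2*u * Real.exp (-(2*u)) - (1 - Real.exp (-(2*u)))/2)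
    ≤ 0 := by
  have hlog2a := Real.log_two_gt_d9
  have hlog2b := Real.log_two_lt_d9
  have hlog2 : 0 < Real.log 2 := Real.log_pos (by norm_num)
  have hki := keyIneq u hu
  have hmono : Real.exp (-(2404492/10^7*u)) ≤ Real.exp (-(u/(6*Real.log 2))) := by
    apply Real.exp_le_exp.2
    rw [neg_le_neg_iff]
    rw [div_le_iff₀ (by positivity)]
    nlinarith
  have hC1 : (5198603:ℝ)/10^7 ≤ 6*Real.log 2/8 := by nlinarith
  have hC2 : 6*Real.log 2/8 ≤ (5198604:ℝ)/10^7 := by nlinarith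
  have hprod : (5198603:ℝ)/10^7 * Real.exp (-(2404492/10^7*u))
      ≤ (6*Real.log 2/8) * Real.exp (-(u/(6*Real.log 2))) :=
    mul_le_mul hC1 hmono (Real.exp_pos _).le (by positivity)
  nlinarith [hki, hprod, hC2]

lemma P1' (l r : ℝ) (hl : 0 < l) (hr : 0 < r) :
    (6 * Real.log 2 / 8) * (1 - Real.exp (-(l / (6 * Real.log 2) * r)))
      + (57/250) * ((l/4) * r * Real.exp (-(l/4 * r)) - (1 - Real.exp (-(l/4 * r)))/2)
      + (1693/2000) * ((2*l) * r * Real.exp (-(2*l * r)) - (1 - Real.exp (-(2*l * r)))/2)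
    ≤ l * r := by
  have h1 : l/4 * r = l*r/4 := by ring
  have h2 : 2*l * r = 2*(l*r) := by ring
  have h3 : l / (6 * Real.log 2) * r = l*r / (6 * Real.log 2) := by ring
  rw [h1, h2, h3]
  exact P1u (l*r) (by positivity)

lemma P2' (l r : ℝ) (hl : 0 < l) (hr : 1 ≤ l * r) :
    (6 * Real.log 2 / 8) * (1 - Real.exp (-(l / (6 * Real.log 2) * r)))
      + (57/250) * ((l/4) * r * Real.exp (-(l/4 * r)) - (1 - Real.exp (-(l/4 * r)))/2)
      + (1693/2000) * ((2*l) * r * Real.exp (-(2*l * r)) - (1 - Real.exp (-(2*l * r)))/2)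
    ≤ 0 := by
  have h1 : l/4 * r = l*r/4 := by ring
  have h2 : 2*l * r = 2*(l*r) := by ring
  have h3 : l / (6 * Real.log 2) * r = l*r / (6 * Real.log 2) := by ring
  rw [h1, h2, h3]
  exact P2u (l*r) hr

section MT
variable (μ : MeasureTheory.Measure ℝ) [MeasureTheory.SigmaFinite μ]

variable (μ : Measure ℝ) [SigmaFinite μ]

lemma xexp_le_one (x : ℝ) : x * Real.exp (-x) ≤ 1 := by
  rcases le_or_gt x 0 with h | h
  · have := Real.exp_pos (-x); nlinarith
  · have h1 : x + 1 ≤ Real.exp x := Real.add_one_le_exp x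
    have h2 : Real.exp (-x) * Real.exp x = 1 := by rw [← Real.exp_add]; simp
    have h3 : 0 < Real.exp (-x) := Real.exp_pos _
    nlinarith

lemma one_sub_exp_le (x : ℝ) : 1 - Real.exp (-x) ≤ x := by
  have := Real.add_one_le_exp (-x); linarith

lemma base_int (hμint : ∫⁻ r in Ioi (0:ℝ), ENNReal.ofReal (min 1 r) ∂μ < ⊤) :
    IntegrableOn (fun r => min 1 r) (Ioi (0:ℝ)) μ := by
  constructor
  · exact ((continuous_const.min continuous_id).aestronglyMeasurable)
  · rw [hasFiniteIntegral_iff_ofReal]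
    · exact hμint
    · refine (ae_restrict_iff' measurableSet_Ioi).2 (Filter.Eventually.of_forall ?_)
      intro r hr
      simp only [le_min_iff]
      constructor <;> [norm_num; exact le_of_lt hr]

lemma int_rexp (hμint : ∫⁻ r in Ioi (0:ℝ), ENNReal.ofReal (min 1 r) ∂μ < ⊤)
    (c : ℝ) (hc : 0 < c) :
    IntegrableOn (fun r => r * Real.exp (-(c*r))) (Ioi (0:ℝ)) μ := by
  apply Integrable.mono' ((base_int μ hμint).const_mul (max 1 c⁻¹))
  · exact (continuous_id.mul ((continuous_const.mul continuous_id).neg.rexp)).aestronglyMeasurable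
  · refine (ae_restrict_iff' measurableSet_Ioi).2 (Filter.Eventually.of_forall ?_)
    intro r hr
    have hr0 : 0 < r := hr
    have hexp : 0 < Real.exp (-(c*r)) := Real.exp_pos _
    have habs : ‖r * Real.exp (-(c*r))‖ = r * Real.exp (-(c*r)) := by
      rw [Real.norm_eq_abs, abs_of_nonneg]; positivity
    rw [habs]
    rcases le_or_gt r 1 with h1 | h1
    · have : r * Real.exp (-(c*r)) ≤ r := by
        nlinarith [Real.exp_le_one_iff.2 (by nlinarith : -(c*r) ≤ 0)]
      have hmin : min 1 r = r := min_eq_right h1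
      rw [hmin]
      calc r * Real.exp (-(c*r)) ≤ r := this
        _ = 1 * r := (one_mul r).symm
        _ ≤ max 1 c⁻¹ * r := by
            apply mul_le_mul_of_nonneg_right (le_max_left _ _) hr0.le
    · have hmin : min 1 r = 1 := min_eq_left h1.le
      rw [hmin, mul_one]
      have hx := xexp_le_one (c*r)
      have : r * Real.exp (-(c*r)) ≤ c⁻¹ := by
        rw [← mul_le_mul_iff_of_pos_left hc]
        calc c * (r * Real.exp (-(c*r))) = (c*r) * Real.exp (-(c*r)) := by ring
          _ ≤ 1 := hx
          _ = c * c⁻¹ := by field_simp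
      exact le_trans this (le_max_right _ _)

lemma int_gexp (hμint : ∫⁻ r in Ioi (0:ℝ), ENNReal.ofReal (min 1 r) ∂μ < ⊤)
    (c : ℝ) (hc : 0 < c) :
    IntegrableOn (fun r => 1 - Real.exp (-(c*r))) (Ioi (0:ℝ)) μ := by
  apply Integrable.mono' ((base_int μ hμint).const_mul (max 1 c))
  · exact (continuous_const.sub ((continuous_const.mul continuous_id).neg.rexp)).aestronglyMeasurable
  · refine (ae_restrict_iff' measurableSet_Ioi).2 (Filter.Eventually.of_forall ?_)
    intro r hr
    have hr0 : 0 < r := hr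
    have hle1 : Real.exp (-(c*r)) ≤ 1 := Real.exp_le_one_iff.2 (by nlinarith)
    have hpos : 0 < Real.exp (-(c*r)) := Real.exp_pos _
    have habs : ‖1 - Real.exp (-(c*r))‖ = 1 - Real.exp (-(c*r)) := by
      rw [Real.norm_eq_abs, abs_of_nonneg]; linarith
    rw [habs]
    rcases le_or_gt r 1 with h1 | h1
    · have hmin : min 1 r = r := min_eq_right h1
      rw [hmin]
      have := one_sub_exp_le (c*r)
      calc 1 - Real.exp (-(c*r)) ≤ c * r := this
        _ ≤ max 1 c * r := mul_le_mul_of_nonneg_right (le_max_right _ _) hr0.le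
    · have hmin : min 1 r = 1 := min_eq_left h1.le
      rw [hmin, mul_one]
      calc 1 - Real.exp (-(c*r)) ≤ 1 := by linarith
        _ ≤ max 1 c := le_max_left _ _

lemma int_id_Ioo (hμint : ∫⁻ r in Ioi (0:ℝ), ENNReal.ofReal (min 1 r) ∂μ < ⊤)
    (T : ℝ) (hT : 0 < T) :
    IntegrableOn (fun r => r) (Ioo (0:ℝ) T) μ := by
  apply Integrable.mono' (((base_int μ hμint).mono_set Ioo_subset_Ioi_self).const_mul (max 1 T))
  · exact continuous_id.aestronglyMeasurable
  · refine (ae_restrict_iff' measurableSet_Ioo).2 (Filter.Eventually.of_forall ?_)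
    intro r hr
    obtain ⟨hr0, hrT⟩ := hr
    rw [Real.norm_eq_abs, abs_of_nonneg hr0.le]
    rcases le_or_gt r 1 with h1 | h1
    · rw [min_eq_right h1]
      nlinarith [le_max_left (1:ℝ) T]
    · rw [min_eq_left h1.le, mul_one]
      calc r ≤ T := hrT.le
        _ ≤ max 1 T := le_max_right _ _


end MT

/-- Under the sandwich bounds, for every λ > 0:
Φ((6 ln 2)/λ) ≥ (1/4) ∫ r e^{−λr} μ(dr), and
λ Φ(1/λ) ≥ ((6 ln 2)/8) g(λ/(6 ln 2)). -/
theorem stmt_9 (μ : Measure ℝ) [SigmaFinite μ]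
    (hμint : ∫⁻ r in Ioi (0:ℝ), ENNReal.ofReal (min 1 r) ∂μ < ⊤)
    (hsand : ∀ l : ℝ, 0 < l →
      (1 / 2) * (∫ r in Ioi (0:ℝ), (1 - Real.exp (-(l * r))) ∂μ)
          ≤ l * ∫ r in Ioi (0:ℝ), r * Real.exp (-(l * r)) ∂μ ∧
        l * ∫ r in Ioi (0:ℝ), r * Real.exp (-(l * r)) ∂μ
          ≤ ∫ r in Ioi (0:ℝ), (1 - Real.exp (-(l * r))) ∂μ) :
    ∀ l : ℝ, 0 < l →
      (1 / 4) * (∫ r in Ioi (0:ℝ), r * Real.exp (-(l * r)) ∂μ)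
          ≤ (∫ r in Ioo (0:ℝ) (6 * Real.log 2 / l), r ∂μ) ∧
        (6 * Real.log 2 / 8) *
            (∫ r in Ioi (0:ℝ), (1 - Real.exp (-(l / (6 * Real.log 2) * r))) ∂μ)
          ≤ l * ∫ r in Ioo (0:ℝ) (1 / l), r ∂μ := by
  intro l hl
  have hlog2 : 0 < Real.log 2 := Real.log_pos (by norm_num)
  constructor
  · -- PART 1
    set T : ℝ := 6 * Real.log 2 / l with hTdef
    have hT : 0 < T := by positivity
    have hIl := int_rexp μ hμint l hl
    have hIl2 := int_rexp μ hμint (l/2) (by positivity)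
    have hsplit : (∫ r in Ioi (0:ℝ), r * Real.exp (-(l * r)) ∂μ)
        = (∫ r in Ioo (0:ℝ) T, r * Real.exp (-(l * r)) ∂μ)
          + (∫ r in Ici T, r * Real.exp (-(l * r)) ∂μ) := by
      rw [← setIntegral_union]
      · rw [Ioo_union_Ici_eq_Ioi hT]
      · exact disjoint_left.mpr (fun x hx hx2 => absurd hx.2 (not_lt.mpr hx2))
      · exact measurableSet_Ici
      · exact hIl.mono_set Ioo_subset_Ioi_self
      · apply hIl.mono_set
        intro x hx
        exact lt_of_lt_of_le hT hx
    -- tail bound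
    have htail1 : (∫ r in Ici T, r * Real.exp (-(l * r)) ∂μ)
        ≤ (1/8) * (∫ r in Ici T, r * Real.exp (-(l/2 * r)) ∂μ) := by
      rw [← integral_const_mul]
      apply setIntegral_mono_on
      · apply hIl.mono_set; intro x hx; exact lt_of_lt_of_le hT hx
      · apply (((hIl2.mono_set (fun x hx => lt_of_lt_of_le hT hx))).const_mul (1/8:ℝ))
      · exact measurableSet_Ici
      · intro r hr
        have hrT : T ≤ r := hr
        have hr0 : 0 < r := lt_of_lt_of_le hT hrT
        have hdecomp : Real.exp (-(l * r)) = Real.exp (-(l/2 * r)) * Real.exp (-(l/2 * r)) := by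
          rw [← Real.exp_add]; ring_nf
        have hkey : Real.exp (-(l/2 * r)) ≤ 1/8 := by
          have h1 : 3 * Real.log 2 ≤ l/2 * r := by
            have : l/2 * T = 3 * Real.log 2 := by
              rw [hTdef]; field_simp; ring
            nlinarith [mul_le_mul_of_nonneg_left hrT (le_of_lt (half_pos hl))]
          have h2 : Real.exp (-(l/2*r)) ≤ Real.exp (-(3*Real.log 2)) :=
            Real.exp_le_exp.2 (by linarith)
          have h3 : Real.exp (-(3*Real.log 2)) = 1/8 := by
            rw [show -(3*Real.log 2) = Real.log (1/8) by
              rw [show (1/8 : ℝ) = 2^(-3 : ℤ) by norm_num]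
              rw [Real.log_zpow]; push_cast; ring]
            exact Real.exp_log (by norm_num)
          linarith
        calc r * Real.exp (-(l * r))
            = (r * Real.exp (-(l/2 * r))) * Real.exp (-(l/2 * r)) := by rw [hdecomp]; ring
          _ ≤ (r * Real.exp (-(l/2 * r))) * (1/8) := by
              apply mul_le_mul_of_nonneg_left hkey
              positivity
          _ = 1/8 * (r * Real.exp (-(l/2 * r))) := by ring
    have htail2 : (∫ r in Ici T, r * Real.exp (-(l/2 * r)) ∂μ)
        ≤ ∫ r in Ioi (0:ℝ), r * Real.exp (-(l/2 * r)) ∂μ := by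
      apply setIntegral_mono_set hIl2
      · refine (ae_restrict_iff' measurableSet_Ioi).2 (Filter.Eventually.of_forall ?_)
        intro r hr
        have : (0:ℝ) < r := hr
        positivity
      · exact HasSubset.Subset.eventuallyLE (fun x hx => lt_of_lt_of_le hT hx)
    -- I(l/2) ≤ 4 I(l)
    have hIhalf : (∫ r in Ioi (0:ℝ), r * Real.exp (-(l/2 * r)) ∂μ)
        ≤ 4 * ∫ r in Ioi (0:ℝ), r * Real.exp (-(l * r)) ∂μ := by
      have hs1 := (hsand (l/2) (by positivity)).2
      have hs2 := (hsand l hl).1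
      have hmono : (∫ r in Ioi (0:ℝ), (1 - Real.exp (-(l/2 * r))) ∂μ)
          ≤ ∫ r in Ioi (0:ℝ), (1 - Real.exp (-(l * r))) ∂μ := by
        apply setIntegral_mono_on (int_gexp μ hμint (l/2) (by positivity))
          (int_gexp μ hμint l hl) measurableSet_Ioi
        intro r hr
        have hr0 : (0:ℝ) < r := hr
        have : Real.exp (-(l * r)) ≤ Real.exp (-(l/2 * r)) := by
          apply Real.exp_le_exp.2; nlinarith
        linarith
      nlinarith [hs1, hs2, hmono]
    -- main bound: Φ(T) ≥ ∫_{Ioo} r e^{-lr}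
    have hmono2 : (∫ r in Ioo (0:ℝ) T, r * Real.exp (-(l * r)) ∂μ)
        ≤ ∫ r in Ioo (0:ℝ) T, r ∂μ := by
      apply setIntegral_mono_on (hIl.mono_set Ioo_subset_Ioi_self)
        (int_id_Ioo μ hμint T hT) measurableSet_Ioo
      intro r hr
      have hr0 : 0 < r := hr.1
      nlinarith [Real.exp_le_one_iff.2 (by nlinarith : -(l*r) ≤ 0), hr0]
    have hInn : 0 ≤ ∫ r in Ioi (0:ℝ), r * Real.exp (-(l * r)) ∂μ := by
      apply setIntegral_nonneg measurableSet_Ioi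
      intro r hr
      have : (0:ℝ) < r := hr
      positivity
    linarith
  · -- PART 2
    set t : ℝ := 1 / l with htdef
    have ht : 0 < t := by positivity
    set s : ℝ := l / (6 * Real.log 2) with hsdef
    have hs : 0 < s := by positivity
    set c₁ : ℝ := l/4 with hc1def
    set c₂ : ℝ := 2*l with hc2def
    have hc₁ : 0 < c₁ := by positivity
    have hc₂ : 0 < c₂ := by positivity
    -- sandwich facts
    have hX : ∀ c : ℝ, 0 < c → 0 ≤ ∫ r in Ioi (0:ℝ),
        (c * r * Real.exp (-(c*r)) - (1 - Real.exp (-(c*r)))/2) ∂μ := by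
      intro c hc
      have hs1 := (hsand c hc).1
      have heq : (∫ r in Ioi (0:ℝ),
          (c * r * Real.exp (-(c*r)) - (1 - Real.exp (-(c*r)))/2) ∂μ)
          = c * (∫ r in Ioi (0:ℝ), r * Real.exp (-(c*r)) ∂μ)
            - (1/2) * (∫ r in Ioi (0:ℝ), (1 - Real.exp (-(c*r))) ∂μ) := by
        rw [integral_sub]
        · congr 1
          · rw [← integral_const_mul]
            congr 1; ext r; ring
          · rw [← integral_const_mul]
            congr 1; ext r; ring
        · have := (int_rexp μ hμint c hc).const_mul c
          convert this using 1
          ext r; ring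
        · have := (int_gexp μ hμint c hc).const_mul (1/2:ℝ)
          convert this using 1
          ext r; ring
      rw [heq]
      linarith
    have hX1 := hX c₁ hc₁
    have hX2 := hX c₂ hc₂
    -- integrable pieces
    have j1 : IntegrableOn (fun r =>
        c₁ * r * Real.exp (-(c₁ * r)) - (1 - Real.exp (-(c₁ * r)))/2) (Ioi (0:ℝ)) μ := by
      apply Integrable.sub
      · have := (int_rexp μ hμint c₁ hc₁).const_mul c₁
        convert this using 1
        ext r; ring
      · have := (int_gexp μ hμint c₁ hc₁).const_mul (1/2:ℝ)
        convert this using 1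
        ext r; ring
    have j2 : IntegrableOn (fun r =>
        c₂ * r * Real.exp (-(c₂ * r)) - (1 - Real.exp (-(c₂ * r)))/2) (Ioi (0:ℝ)) μ := by
      apply Integrable.sub
      · have := (int_rexp μ hμint c₂ hc₂).const_mul c₂
        convert this using 1
        ext r; ring
      · have := (int_gexp μ hμint c₂ hc₂).const_mul (1/2:ℝ)
        convert this using 1
        ext r; ring
    have j0 : IntegrableOn (fun r => 1 - Real.exp (-(s * r))) (Ioi (0:ℝ)) μ :=
      int_gexp μ hμint s hs
    -- the combined function g
    set g : ℝ → ℝ := fun r =>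
      (6 * Real.log 2 / 8) * (1 - Real.exp (-(s * r)))
        + (57/250) * (c₁ * r * Real.exp (-(c₁ * r)) - (1 - Real.exp (-(c₁ * r)))/2)
        + (1693/2000) * (c₂ * r * Real.exp (-(c₂ * r)) - (1 - Real.exp (-(c₂ * r)))/2)
      with hgdef
    have hgint : IntegrableOn g (Ioi (0:ℝ)) μ := by
      apply Integrable.add
      apply Integrable.add
      · exact j0.const_mul _
      · exact j1.const_mul _
      · exact j2.const_mul _
    have hexpand : (∫ r in Ioi (0:ℝ), g r ∂μ)
        = (6 * Real.log 2 / 8) * (∫ r in Ioi (0:ℝ), (1 - Real.exp (-(s * r))) ∂μ)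
          + (57/250) * (∫ r in Ioi (0:ℝ),
              (c₁ * r * Real.exp (-(c₁ * r)) - (1 - Real.exp (-(c₁ * r)))/2) ∂μ)
          + (1693/2000) * (∫ r in Ioi (0:ℝ),
              (c₂ * r * Real.exp (-(c₂ * r)) - (1 - Real.exp (-(c₂ * r)))/2) ∂μ) := by
      rw [hgdef]
      have h2 := integral_add (μ := μ.restrict (Ioi (0:ℝ)))
        ((j0.const_mul ((6:ℝ) * Real.log 2 / 8)).add (j1.const_mul ((57:ℝ)/250)))
        (j2.const_mul ((1693:ℝ)/2000))
      have h3 := integral_add (μ := μ.restrict (Ioi (0:ℝ)))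
        (j0.const_mul ((6:ℝ) * Real.log 2 / 8)) (j1.const_mul ((57:ℝ)/250))
      simp only [Pi.add_apply] at h2 h3
      rw [h2, h3, integral_const_mul, integral_const_mul, integral_const_mul]
    have hkey1 : (6 * Real.log 2 / 8) * (∫ r in Ioi (0:ℝ), (1 - Real.exp (-(s * r))) ∂μ)
        ≤ ∫ r in Ioi (0:ℝ), g r ∂μ := by
      rw [hexpand]
      nlinarith [hX1, hX2]
    have hsplit2 : (∫ r in Ioi (0:ℝ), g r ∂μ)
        = (∫ r in Ioo (0:ℝ) t, g r ∂μ) + (∫ r in Ici t, g r ∂μ) := by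
      rw [← setIntegral_union]
      · rw [Ioo_union_Ici_eq_Ioi ht]
      · exact disjoint_left.mpr (fun x hx hx2 => absurd hx.2 (not_lt.mpr hx2))
      · exact measurableSet_Ici
      · exact hgint.mono_set Ioo_subset_Ioi_self
      · exact hgint.mono_set (fun x hx => lt_of_lt_of_le ht hx)
    have hub1 : (∫ r in Ioo (0:ℝ) t, g r ∂μ) ≤ ∫ r in Ioo (0:ℝ) t, l * r ∂μ := by
      apply setIntegral_mono_on (hgint.mono_set Ioo_subset_Ioi_self)
        ((int_id_Ioo μ hμint t ht).const_mul l) measurableSet_Ioo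
      intro r hr
      have hexact := P1' l r hl hr.1
      rw [hgdef]
      simp only []
      rw [hsdef, hc1def, hc2def]
      exact hexact
    have hub2 : (∫ r in Ici t, g r ∂μ) ≤ 0 := by
      apply setIntegral_nonpos measurableSet_Ici
      intro r hr
      have hlr : 1 ≤ l * r := by
        have : l * t ≤ l * r := mul_le_mul_of_nonneg_left hr hl.le
        rw [htdef] at this
        field_simp at this
        linarith [this]
      have hexact := P2' l r hl hlr
      rw [hgdef]
      simp only []
      rw [hsdef, hc1def, hc2def]
      exact hexact
    have hfin : (∫ r in Ioo (0:ℝ) t, l * r ∂μ) = l * ∫ r in Ioo (0:ℝ) t, r ∂μ :=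
      integral_const_mul l _
    calc (6 * Real.log 2 / 8) * (∫ r in Ioi (0:ℝ), (1 - Real.exp (-(s * r))) ∂μ)
        ≤ ∫ r in Ioi (0:ℝ), g r ∂μ := hkey1
      _ = (∫ r in Ioo (0:ℝ) t, g r ∂μ) + (∫ r in Ici t, g r ∂μ) := hsplit2
      _ ≤ (∫ r in Ioo (0:ℝ) t, l * r ∂μ) + 0 := add_le_add hub1 hub2
      _ = l * ∫ r in Ioo (0:ℝ) t, r ∂μ := by rw [add_zero, hfin]
end

section
/- Assume the sandwich bounds (1/2) g(λ) ≤ λ ∫_{(0,∞)} r e^{−λr} μ(dr) ≤ g(λ) hold for all λ > 0, and that lim_{λ→∞} g(λ) = ∞. Then lim_{ε→0+} Φ(ε)/ε = ∞. -/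
open MeasureTheory Set Filter Topology

/-- Pointwise tail bound: for `u ≥ 2`, `u e^{-u} ≤ (1/3)(1 - e^{-u})`. -/
lemma aux_exp_tail_bound {u : ℝ} (hu : 2 ≤ u) :
    u * Real.exp (-u) ≤ (1/3) * (1 - Real.exp (-u)) := by
  have h2 : (7:ℝ) < Real.exp 2 := by
    have h := Real.exp_one_gt_d9
    have : Real.exp 2 = Real.exp 1 * Real.exp 1 := by
      rw [← Real.exp_add]; norm_num
    nlinarith [Real.exp_pos 1]
  have h1 : u - 1 ≤ Real.exp (u - 2) := by
    have := Real.add_one_le_exp (u - 2); linarith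
  have hE : 7 * (u - 1) ≤ Real.exp u := by
    have : Real.exp u = Real.exp 2 * Real.exp (u - 2) := by
      rw [← Real.exp_add]; ring_nf
    nlinarith [Real.exp_pos (u - 2)]
  have key : 3 * u ≤ Real.exp u - 1 := by nlinarith
  have hg : Real.exp u * Real.exp (-u) = 1 := by
    rw [← Real.exp_add]; simp
  nlinarith [mul_nonneg (by linarith : (0:ℝ) ≤ Real.exp u - 1 - 3 * u)
    (Real.exp_pos (-u)).le, Real.exp_pos (-u)]

/-- Integrability from domination by `C * min 1 r`. -/
lemma aux_integrable (μ : Measure ℝ)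
    (hμint : ∫⁻ r in Ioi (0:ℝ), ENNReal.ofReal (min 1 r) ∂μ < ⊤)
    (f : ℝ → ℝ) (hf : Measurable f) (C : ℝ) (hC : 0 ≤ C)
    (hbound : ∀ r ∈ Ioi (0:ℝ), |f r| ≤ C * min 1 r) :
    IntegrableOn f (Ioi (0:ℝ)) μ := by
  refine ⟨hf.aestronglyMeasurable, ?_⟩
  rw [hasFiniteIntegral_iff_norm]
  have hle : ∫⁻ r in Ioi (0:ℝ), ENNReal.ofReal ‖f r‖ ∂μ
      ≤ ∫⁻ r in Ioi (0:ℝ), ENNReal.ofReal C * ENNReal.ofReal (min 1 r) ∂μ := by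
    refine lintegral_mono_ae ?_
    filter_upwards [ae_restrict_mem measurableSet_Ioi] with r hr
    rw [← ENNReal.ofReal_mul hC, Real.norm_eq_abs]
    exact ENNReal.ofReal_le_ofReal (hbound r hr)
  calc ∫⁻ r in Ioi (0:ℝ), ENNReal.ofReal ‖f r‖ ∂μ
      ≤ ∫⁻ r in Ioi (0:ℝ), ENNReal.ofReal C * ENNReal.ofReal (min 1 r) ∂μ := hle
    _ = ENNReal.ofReal C * ∫⁻ r in Ioi (0:ℝ), ENNReal.ofReal (min 1 r) ∂μ := by
        rw [lintegral_const_mul]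
        exact ENNReal.measurable_ofReal.comp (by fun_prop)
    _ < ⊤ := ENNReal.mul_lt_top ENNReal.ofReal_lt_top hμint

/-- Under the sandwich bounds and lim_{λ→∞} g(λ) = ∞, one has
lim_{ε→0+} Φ(ε)/ε = ∞. -/
theorem stmt_11 (μ : Measure ℝ) [SigmaFinite μ]
    (hμint : ∫⁻ r in Ioi (0:ℝ), ENNReal.ofReal (min 1 r) ∂μ < ⊤)
    (hsand : ∀ l : ℝ, 0 < l →
      (1 / 2) * (∫ r in Ioi (0:ℝ), (1 - Real.exp (-(l * r))) ∂μ)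
          ≤ l * ∫ r in Ioi (0:ℝ), r * Real.exp (-(l * r)) ∂μ ∧
        l * ∫ r in Ioi (0:ℝ), r * Real.exp (-(l * r)) ∂μ
          ≤ ∫ r in Ioi (0:ℝ), (1 - Real.exp (-(l * r))) ∂μ)
    (hg : Tendsto (fun l : ℝ => ∫ r in Ioi (0:ℝ), (1 - Real.exp (-(l * r))) ∂μ)
      atTop atTop) :
    Tendsto (fun ε : ℝ => (∫ r in Ioo (0:ℝ) ε, r ∂μ) / ε) (𝓝[>] 0) atTop := by
  -- integrability facts
  have intE : ∀ l : ℝ, 0 < l →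
      IntegrableOn (fun r => r * Real.exp (-(l * r))) (Ioi (0:ℝ)) μ := by
    intro l hl
    refine aux_integrable μ hμint _ (by fun_prop) (max 1 l⁻¹)
      (le_trans zero_le_one (le_max_left _ _)) ?_
    intro r hr
    have hr0 : (0:ℝ) < r := hr
    have hexp : Real.exp (-(l * r)) ≤ 1 := Real.exp_le_one_iff.mpr (by nlinarith)
    have hexp0 : (0:ℝ) < Real.exp (-(l * r)) := Real.exp_pos _
    have hnn : 0 ≤ r * Real.exp (-(l * r)) := mul_nonneg hr0.le hexp0.le
    rw [abs_of_nonneg hnn]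
    rcases le_total r 1 with h | h
    · rw [min_eq_right h]
      have h1 : max 1 l⁻¹ ≥ 1 := le_max_left _ _
      nlinarith
    · rw [min_eq_left h, mul_one]
      have hE : l * r ≤ Real.exp (l * r) := by
        nlinarith [Real.add_one_le_exp (l * r)]
      have hinv : Real.exp (l * r) * Real.exp (-(l * r)) = 1 := by
        rw [← Real.exp_add]; simp
      have hmul : r * Real.exp (-(l * r)) * l ≤ 1 := by
        nlinarith [mul_nonneg (sub_nonneg.mpr hE) hexp0.le]
      have hli : r * Real.exp (-(l * r)) ≤ l⁻¹ := by
        rw [inv_eq_one_div, le_div_iff₀ hl]; linarith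
      exact hli.trans (le_max_right _ _)
  have intG : ∀ l : ℝ, 0 < l →
      IntegrableOn (fun r => 1 - Real.exp (-(l * r))) (Ioi (0:ℝ)) μ := by
    intro l hl
    refine aux_integrable μ hμint _ (by fun_prop) (max 1 l)
      (le_trans zero_le_one (le_max_left _ _)) ?_
    intro r hr
    have hr0 : (0:ℝ) < r := hr
    have hexp : Real.exp (-(l * r)) ≤ 1 := Real.exp_le_one_iff.mpr (by nlinarith)
    have hexp0 : (0:ℝ) < Real.exp (-(l * r)) := Real.exp_pos _
    rw [abs_of_nonneg (by linarith)]
    have h1 : 1 - Real.exp (-(l * r)) ≤ l * r := by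
      nlinarith [Real.add_one_le_exp (-(l * r))]
    rcases le_total r 1 with h | h
    · rw [min_eq_right h]
      calc 1 - Real.exp (-(l * r)) ≤ l * r := h1
        _ ≤ max 1 l * r := by nlinarith [le_max_right (1:ℝ) l]
    · rw [min_eq_left h, mul_one]
      calc 1 - Real.exp (-(l * r)) ≤ 1 := by linarith
        _ ≤ max 1 l := le_max_left _ _
  have intMin : IntegrableOn (fun r => min 1 r) (Ioi (0:ℝ)) μ := by
    refine aux_integrable μ hμint _ (by fun_prop) 1 zero_le_one ?_
    intro r hr
    have hr0 : (0:ℝ) < r := hr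
    rw [one_mul, abs_of_nonneg (le_min zero_le_one hr0.le)]
  -- the key estimate
  have key : ∀ ε : ℝ, ε ∈ Ioo (0:ℝ) 1 →
      (1/12) * (∫ r in Ioi (0:ℝ), (1 - Real.exp (-((2/ε) * r))) ∂μ)
        ≤ (∫ r in Ioo (0:ℝ) ε, r ∂μ) / ε := by
    intro ε hε
    obtain ⟨hε0, hε1⟩ := hε
    set l : ℝ := 2/ε with hl_def
    have hl : 0 < l := by positivity
    have hlε : l * ε = 2 := by rw [hl_def]; field_simp
    set G : ℝ := ∫ r in Ioi (0:ℝ), (1 - Real.exp (-(l * r))) ∂μ with hG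
    set I : ℝ := ∫ r in Ioi (0:ℝ), r * Real.exp (-(l * r)) ∂μ with hI
    have hsw : (1/2) * G ≤ l * I := (hsand l hl).1
    -- split the integral
    have hunion : Ioo (0:ℝ) ε ∪ Ici ε = Ioi 0 := Ioo_union_Ici_eq_Ioi hε0
    have hIoo_sub : Ioo (0:ℝ) ε ⊆ Ioi 0 := fun x hx => hx.1
    have hIci_sub : Ici ε ⊆ Ioi (0:ℝ) := fun x hx => lt_of_lt_of_le hε0 hx
    have intE_Ioo : IntegrableOn (fun r => r * Real.exp (-(l * r))) (Ioo 0 ε) μ :=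
      (intE l hl).mono_set hIoo_sub
    have intE_Ici : IntegrableOn (fun r => r * Real.exp (-(l * r))) (Ici ε) μ :=
      (intE l hl).mono_set hIci_sub
    have hsplit : I = (∫ r in Ioo (0:ℝ) ε, r * Real.exp (-(l * r)) ∂μ)
        + ∫ r in Ici ε, r * Real.exp (-(l * r)) ∂μ := by
      rw [hI, ← hunion]
      exact setIntegral_union ((Iio_disjoint_Ici le_rfl).mono_left Ioo_subset_Iio_self) measurableSet_Ici
        intE_Ioo intE_Ici
    -- tail bound
    have htail : ∫ r in Ici ε, r * Real.exp (-(l * r)) ∂μ ≤ (1/(3*l)) * G := by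
      have step1 : ∫ r in Ici ε, r * Real.exp (-(l * r)) ∂μ
          ≤ ∫ r in Ici ε, (1/(3*l)) * (1 - Real.exp (-(l * r))) ∂μ := by
        refine setIntegral_mono_on intE_Ici
          (((intG l hl).mono_set hIci_sub).const_mul _) measurableSet_Ici ?_
        intro r hr
        have hu : 2 ≤ l * r := by
          calc (2:ℝ) = l * ε := hlε.symm
            _ ≤ l * r := mul_le_mul_of_nonneg_left hr hl.le
        have hb := aux_exp_tail_bound hu
        have hmul : l * (r * Real.exp (-(l * r)))
            ≤ l * ((1/(3*l)) * (1 - Real.exp (-(l*r)))) := by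
          calc l * (r * Real.exp (-(l * r)))
              = (l * r) * Real.exp (-(l * r)) := by ring
            _ ≤ (1/3) * (1 - Real.exp (-(l * r))) := hb
            _ = l * ((1/(3*l)) * (1 - Real.exp (-(l*r)))) := by
                field_simp
        exact le_of_mul_le_mul_left hmul hl
      have step2 : ∫ r in Ici ε, (1 - Real.exp (-(l * r))) ∂μ ≤ G := by
        refine setIntegral_mono_set (intG l hl) ?_ (HasSubset.Subset.eventuallyLE hIci_sub)
        filter_upwards [ae_restrict_mem measurableSet_Ioi] with r hr
        have hr0 : (0:ℝ) < r := hr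
        have : Real.exp (-(l * r)) ≤ 1 := Real.exp_le_one_iff.mpr (by nlinarith)
        simp only [Pi.zero_apply]; linarith
      calc ∫ r in Ici ε, r * Real.exp (-(l * r)) ∂μ
          ≤ ∫ r in Ici ε, (1/(3*l)) * (1 - Real.exp (-(l * r))) ∂μ := step1
        _ = (1/(3*l)) * ∫ r in Ici ε, (1 - Real.exp (-(l * r))) ∂μ := by
            rw [integral_const_mul]
        _ ≤ (1/(3*l)) * G := by
            exact mul_le_mul_of_nonneg_left step2 (by positivity)
    -- lower bound for the small-piece integral
    have hlow : G / (6 * l) ≤ ∫ r in Ioo (0:ℝ) ε, r * Real.exp (-(l * r)) ∂μ := by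
      have h2 : l * ∫ r in Ici ε, r * Real.exp (-(l * r)) ∂μ ≤ (1/3) * G := by
        have h := mul_le_mul_of_nonneg_left htail hl.le
        calc l * ∫ r in Ici ε, r * Real.exp (-(l * r)) ∂μ
            ≤ l * ((1/(3*l)) * G) := h
          _ = (1/3) * G := by field_simp
      have h3 : (1/6) * G ≤ l * ∫ r in Ioo (0:ℝ) ε, r * Real.exp (-(l * r)) ∂μ := by
        have hq : l * I = l * (∫ r in Ioo (0:ℝ) ε, r * Real.exp (-(l * r)) ∂μ)
            + l * ∫ r in Ici ε, r * Real.exp (-(l * r)) ∂μ := by rw [hsplit]; ring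
        linarith
      rw [div_le_iff₀ (by positivity : (0:ℝ) < 6 * l)]
      nlinarith
    -- compare with ∫ r
    have hmono : ∫ r in Ioo (0:ℝ) ε, r * Real.exp (-(l * r)) ∂μ
        ≤ ∫ r in Ioo (0:ℝ) ε, r ∂μ := by
      have intR : IntegrableOn (fun r : ℝ => r) (Ioo 0 ε) μ := by
        refine (intMin.mono_set hIoo_sub).congr_fun ?_ measurableSet_Ioo
        intro r hr
        exact min_eq_right (le_of_lt (lt_trans hr.2 hε1))
      refine setIntegral_mono_on intE_Ioo intR measurableSet_Ioo ?_
      intro r hr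
      have hr0 : 0 < r := hr.1
      have : Real.exp (-(l * r)) ≤ 1 := Real.exp_le_one_iff.mpr (by nlinarith)
      nlinarith
    -- conclude
    rw [le_div_iff₀ hε0]
    have hGe : G / (6 * l) = (1/12) * G * ε := by
      rw [hl_def, show (6:ℝ) * (2/ε) = 12/ε by ring, div_div_eq_mul_div]
      ring
    linarith [hlow.trans hmono]
  -- limit argument
  have hcomp : Tendsto (fun ε : ℝ => 2/ε) (𝓝[>] (0:ℝ)) atTop := by
    have h := tendsto_inv_nhdsGT_zero.const_mul_atTop (by norm_num : (0:ℝ) < 2)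
    refine h.congr fun ε => ?_
    rw [div_eq_mul_inv]
  have h2 : Tendsto (fun ε : ℝ =>
      (1/12) * ∫ r in Ioi (0:ℝ), (1 - Real.exp (-((2/ε) * r))) ∂μ)
      (𝓝[>] (0:ℝ)) atTop := by
    exact (hg.comp hcomp).const_mul_atTop (by norm_num : (0:ℝ) < 1/12)
  refine tendsto_atTop_mono' _ ?_ h2
  filter_upwards [Ioo_mem_nhdsGT_of_mem (by norm_num : (0:ℝ) ∈ Ico (0:ℝ) 1)]
    with ε hε using key ε hε
end

section
/- Assume moreover ∫_{(0,1)} ℓ π(dℓ) = ∞. Let φ : [0,∞) → [0,∞) satisfy ψ(φ(x)) = x and φ(ψ(x)) = x for all x ≥ 0, and let π_* be a σ-finite measure on (0,∞) such that φ(λ) = ∫_{(0,∞)} (1 − e^{−λr}) π_*(dr) for every λ > 0. Then lim_{ε→0+} π_*((ε,∞)) = ∞ and lim_{ε→0+} (1/ε) ∫_{(0,ε)} r π_*(dr) = ∞. -/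
/-!
Convexity of `ψ`, together with `ψ' (2x) ≤ 2 ψ' x`, gives `φ λ ≤ 8 (φ (2λ) - φ λ)` for the inverse
`φ`. Since `φ` is unbounded, `π_*` has infinite mass, which is the first claim. For the second,
split `φ (2λ) - φ λ = ∫ (e^{-λr} - e^{-2λr}) π_*(dr)` at `r = ε = 8/λ`: small jumps contribute
at most `λ ∫_{(0,ε)} r π_*(dr)`, large ones at most `e^{-8} φ λ ≤ φ λ / 16`. Hence
`(1/ε) ∫_{(0,ε)} r π_*(dr) ≥ φ (8/ε) / 128`, which tends to `∞`.
-/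

open MeasureTheory Set Filter Topology

-- Tangent-line bounds for the convex function `t ↦ e^{-t} - 1 + t`, of derivative `1 - e^{-t}`.
lemma sub_mul_one_sub_exp_neg_le (a b : ℝ) :
    (b - a) * (1 - Real.exp (-a)) ≤ (Real.exp (-b) - 1 + b) - (Real.exp (-a) - 1 + a) := by
  have hb : Real.exp (-b) = Real.exp (-a) * Real.exp (-(b - a)) := by
    rw [← Real.exp_add]; ring_nf
  rw [hb]
  nlinarith [Real.add_one_le_exp (-(b - a)), Real.exp_pos (-a)]

lemma sub_le_sub_mul_one_sub_exp_neg (a b : ℝ) :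
    (Real.exp (-b) - 1 + b) - (Real.exp (-a) - 1 + a) ≤ (b - a) * (1 - Real.exp (-b)) := by
  have ha : Real.exp (-a) = Real.exp (-b) * Real.exp (b - a) := by
    rw [← Real.exp_add]; ring_nf
  rw [ha]
  nlinarith [Real.add_one_le_exp (b - a), Real.exp_pos (-b)]

lemma exp_neg_mul_le_one {x ℓ : ℝ} (hx : 0 ≤ x) (hℓ : 0 ≤ ℓ) : Real.exp (-(x * ℓ)) ≤ 1 :=
  Real.exp_le_one_iff.2 (neg_nonpos.2 (mul_nonneg hx hℓ))

lemma monotoneOn_of_rightInvOn {α β : Type*} [PartialOrder α] [LinearOrder β] {ψ : β → α}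
    {φ : α → β} {s : Set α} {t : Set β} (hψ : MonotoneOn ψ t) (hφ : MapsTo φ s t)
    (hinv : RightInvOn φ ψ s) : MonotoneOn φ s := fun a ha b hb hab => by
  by_contra! h
  have hba := hψ (hφ hb) (hφ ha) h.le
  rw [hinv ha, hinv hb] at hba
  exact h.ne (congrArg φ (le_antisymm hab hba)).symm

lemma tendsto_atTop_of_leftInvOn {ψ φ : ℝ → ℝ} (hφ : MonotoneOn φ (Ici 0))
    (hψ : MapsTo ψ (Ici 0) (Ici 0)) (hinv : LeftInvOn φ ψ (Ici 0)) :
    Tendsto φ atTop atTop := by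
  refine tendsto_atTop_atTop.2 fun M => ⟨ψ (max M 0), fun l hl => ?_⟩
  have hM : max M 0 ∈ Ici 0 := le_max_right M 0
  calc M ≤ max M 0 := le_max_left M 0
    _ = φ (ψ (max M 0)) := (hinv hM).symm
    _ ≤ φ l := hφ (hψ hM) (le_trans (hψ hM) hl) hl

lemma tendsto_measure_Ioi_nhdsGT (μ : Measure ℝ) (a : ℝ) :
    Tendsto (fun ε => μ (Ioi ε)) (𝓝[>] a) (𝓝 (μ (Ioi a))) := by
  rw [← map_coe_Ioi_atBot a, tendsto_map'_iff]
  have hU : (⋃ ε : Ioi a, Ioi (ε : ℝ)) = Ioi a := by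
    ext x
    simp only [mem_iUnion, mem_Ioi, Subtype.exists, exists_prop]
    exact ⟨fun ⟨ε, hε, hx⟩ => hε.trans hx, fun hx => exists_between hx⟩
  have := tendsto_measure_iUnion_atBot (μ := μ) (s := fun ε : Ioi a => Ioi (ε : ℝ))
    fun ε δ h => Ioi_subset_Ioi h
  rwa [hU] at this

section BranchingMechanism

variable (π : Measure ℝ) (α₀ : ℝ)

noncomputable def branchingMechanism (l : ℝ) : ℝ :=
  α₀ * l + ∫ x in Ioi (0:ℝ), (Real.exp (-(l * x)) - 1 + l * x) ∂π

/-- The derivative `ψ'` of `ψ = branchingMechanism π α₀`. Instead of differentiating under the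
integral we only prove the mean-value bounds `(u - v) ψ' v ≤ ψ u - ψ v ≤ (u - v) ψ' u`. -/
noncomputable def branchingMechanismDeriv (x : ℝ) : ℝ :=
  α₀ + ∫ ℓ in Ioi (0:ℝ), ℓ * (1 - Real.exp (-(x * ℓ))) ∂π

variable {π α₀}

lemma integrableOn_mul_one_sub_exp_neg
    (hπ : IntegrableOn (fun x : ℝ => min x (x ^ 2)) (Ioi 0) π) {x : ℝ} (hx : 0 ≤ x) :
    IntegrableOn (fun ℓ => ℓ * (1 - Real.exp (-(x * ℓ)))) (Ioi 0) π := by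
  refine Integrable.mono' (hπ.const_mul (1 + x)) (by fun_prop)
    (ae_restrict_of_forall_mem measurableSet_Ioi fun ℓ (hℓ : 0 < ℓ) => ?_)
  have hE := exp_neg_mul_le_one hx hℓ.le
  have hlin : 1 - Real.exp (-(x * ℓ)) ≤ x * ℓ := by linarith [Real.add_one_le_exp (-(x * ℓ))]
  have hpos : 0 ≤ ℓ * (1 - Real.exp (-(x * ℓ))) := mul_nonneg hℓ.le (by linarith)
  rw [Real.norm_of_nonneg hpos]
  rcases min_choice ℓ (ℓ ^ 2) with h | h <;> rw [h]
  · nlinarith [Real.exp_pos (-(x * ℓ))]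
  · nlinarith [mul_le_mul_of_nonneg_left hlin hℓ.le]

lemma integrableOn_exp_neg_sub_one_add
    (hπ : IntegrableOn (fun x : ℝ => min x (x ^ 2)) (Ioi 0) π) {x : ℝ} (hx : 0 ≤ x) :
    IntegrableOn (fun ℓ => Real.exp (-(x * ℓ)) - 1 + x * ℓ) (Ioi 0) π := by
  refine Integrable.mono' ((integrableOn_mul_one_sub_exp_neg hπ hx).const_mul x) (by fun_prop)
    (ae_restrict_of_forall_mem measurableSet_Ioi fun ℓ (hℓ : 0 < ℓ) => ?_)
  have hlower : 0 ≤ Real.exp (-(x * ℓ)) - 1 + x * ℓ := by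
    simpa using sub_mul_one_sub_exp_neg_le 0 (x * ℓ)
  have hupper : Real.exp (-(x * ℓ)) - 1 + x * ℓ ≤ x * (ℓ * (1 - Real.exp (-(x * ℓ)))) := by
    simpa [mul_assoc] using sub_le_sub_mul_one_sub_exp_neg 0 (x * ℓ)
  rwa [Real.norm_of_nonneg hlower]

@[simp]
lemma branchingMechanism_zero : branchingMechanism π α₀ 0 = 0 := by
  simp [branchingMechanism]

lemma branchingMechanismDeriv_nonneg (hα₀ : 0 ≤ α₀) {x : ℝ} (hx : 0 ≤ x) :
    0 ≤ branchingMechanismDeriv π α₀ x :=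
  add_nonneg hα₀ <| setIntegral_nonneg measurableSet_Ioi fun ℓ (hℓ : 0 < ℓ) =>
    mul_nonneg hℓ.le (sub_nonneg.2 (exp_neg_mul_le_one hx hℓ.le))

lemma branchingMechanismDeriv_mono
    (hπ : IntegrableOn (fun x : ℝ => min x (x ^ 2)) (Ioi 0) π) {x y : ℝ} (hx : 0 ≤ x)
    (hxy : x ≤ y) :
    branchingMechanismDeriv π α₀ x ≤ branchingMechanismDeriv π α₀ y := by
  refine add_le_add_right (setIntegral_mono_on (integrableOn_mul_one_sub_exp_neg hπ hx)
    (integrableOn_mul_one_sub_exp_neg hπ (hx.trans hxy)) measurableSet_Ioi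
    fun ℓ (hℓ : 0 < ℓ) => ?_) α₀
  gcongr

lemma branchingMechanismDeriv_two_mul_le (hα₀ : 0 ≤ α₀)
    (hπ : IntegrableOn (fun x : ℝ => min x (x ^ 2)) (Ioi 0) π) {x : ℝ} (hx : 0 ≤ x) :
    branchingMechanismDeriv π α₀ (2 * x) ≤ 2 * branchingMechanismDeriv π α₀ x := by
  have hint : ∫ ℓ in Ioi (0:ℝ), ℓ * (1 - Real.exp (-(2 * x * ℓ))) ∂π ≤
      ∫ ℓ in Ioi (0:ℝ), 2 * (ℓ * (1 - Real.exp (-(x * ℓ)))) ∂π := by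
    refine setIntegral_mono_on (integrableOn_mul_one_sub_exp_neg hπ (by linarith))
      ((integrableOn_mul_one_sub_exp_neg hπ hx).const_mul 2) measurableSet_Ioi
      fun ℓ (hℓ : 0 < ℓ) => ?_
    -- `1 - e^{-2t} = (1 - e^{-t}) (1 + e^{-t})`
    have hsq : Real.exp (-(2 * x * ℓ)) = Real.exp (-(x * ℓ)) ^ 2 := by
      rw [← Real.exp_nat_mul]; ring_nf
    have hE := exp_neg_mul_le_one hx hℓ.le
    have hfactor : 1 - Real.exp (-(x * ℓ)) ^ 2 ≤ 2 * (1 - Real.exp (-(x * ℓ))) := by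
      nlinarith [Real.exp_pos (-(x * ℓ))]
    rw [hsq]
    nlinarith [mul_le_mul_of_nonneg_left hfactor hℓ.le]
  rw [integral_const_mul] at hint
  unfold branchingMechanismDeriv
  linarith

lemma branchingMechanism_sub (hπ : IntegrableOn (fun x : ℝ => min x (x ^ 2)) (Ioi 0) π)
    {u v : ℝ} (hu : 0 ≤ u) (hv : 0 ≤ v) :
    branchingMechanism π α₀ u - branchingMechanism π α₀ v = α₀ * (u - v) +
      ∫ ℓ in Ioi (0:ℝ),
        ((Real.exp (-(u * ℓ)) - 1 + u * ℓ) - (Real.exp (-(v * ℓ)) - 1 + v * ℓ)) ∂π := by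
  rw [integral_sub (integrableOn_exp_neg_sub_one_add hπ hu)
    (integrableOn_exp_neg_sub_one_add hπ hv)]
  unfold branchingMechanism
  ring

lemma mul_branchingMechanismDeriv_le_sub
    (hπ : IntegrableOn (fun x : ℝ => min x (x ^ 2)) (Ioi 0) π)
    {u v : ℝ} (hu : 0 ≤ u) (hv : 0 ≤ v) :
    (u - v) * branchingMechanismDeriv π α₀ v ≤
      branchingMechanism π α₀ u - branchingMechanism π α₀ v := by
  rw [branchingMechanism_sub hπ hu hv, branchingMechanismDeriv, mul_add, mul_comm (u - v) α₀,
    ← integral_const_mul]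
  refine add_le_add_right (setIntegral_mono_on
    ((integrableOn_mul_one_sub_exp_neg hπ hv).const_mul _)
    ((integrableOn_exp_neg_sub_one_add hπ hu).sub (integrableOn_exp_neg_sub_one_add hπ hv))
    measurableSet_Ioi fun ℓ (hℓ : 0 < ℓ) => ?_) _
  have hpt := sub_mul_one_sub_exp_neg_le (v * ℓ) (u * ℓ)
  rw [← sub_mul, mul_assoc] at hpt
  exact hpt

lemma sub_le_mul_branchingMechanismDeriv
    (hπ : IntegrableOn (fun x : ℝ => min x (x ^ 2)) (Ioi 0) π)
    {u v : ℝ} (hu : 0 ≤ u) (hv : 0 ≤ v) :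
    branchingMechanism π α₀ u - branchingMechanism π α₀ v ≤
      (u - v) * branchingMechanismDeriv π α₀ u := by
  rw [branchingMechanism_sub hπ hu hv, branchingMechanismDeriv, mul_add, mul_comm (u - v) α₀,
    ← integral_const_mul]
  refine add_le_add_right (setIntegral_mono_on
    ((integrableOn_exp_neg_sub_one_add hπ hu).sub (integrableOn_exp_neg_sub_one_add hπ hv))
    ((integrableOn_mul_one_sub_exp_neg hπ hu).const_mul _)
    measurableSet_Ioi fun ℓ (hℓ : 0 < ℓ) => ?_) _
  have hpt := sub_le_sub_mul_one_sub_exp_neg (v * ℓ) (u * ℓ)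
  rw [← sub_mul, mul_assoc] at hpt
  exact hpt

lemma branchingMechanism_monotoneOn (hα₀ : 0 ≤ α₀)
    (hπ : IntegrableOn (fun x : ℝ => min x (x ^ 2)) (Ioi 0) π) :
    MonotoneOn (branchingMechanism π α₀) (Ici 0) := fun a (ha : 0 ≤ a) b (hb : 0 ≤ b) hab => by
  have hmv := mul_branchingMechanismDeriv_le_sub (α₀ := α₀) hπ hb ha
  nlinarith [branchingMechanismDeriv_nonneg (π := π) hα₀ ha]

/-- The mean-value bounds compare both `ψ u` and `ψ w - ψ u` with `u ψ' u`; when `w ≤ 2u` this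
uses that `ψ'` at most doubles when its argument does. -/
lemma le_eight_mul_sub_of_branchingMechanism_eq_two_mul (hα₀ : 0 ≤ α₀)
    (hπ : IntegrableOn (fun x : ℝ => min x (x ^ 2)) (Ioi 0) π) {u w : ℝ} (hu : 0 < u)
    (hw : 0 ≤ w) (hψu : 0 < branchingMechanism π α₀ u)
    (hψw : branchingMechanism π α₀ w = 2 * branchingMechanism π α₀ u) :
    u ≤ 8 * (w - u) := by
  set ψ := branchingMechanism π α₀
  set D := branchingMechanismDeriv π α₀
  rcases le_total (2 * u) w with h2u | hw2u
  · linarith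
  have huw : u ≤ w := by
    by_contra! hwu
    linarith [branchingMechanism_monotoneOn hα₀ hπ (mem_Ici.2 hw) (mem_Ici.2 hu.le) hwu.le]
  have hDu : 0 < D u := by
    have hmv := sub_le_mul_branchingMechanismDeriv hπ hu.le le_rfl (α₀ := α₀)
    simp only [branchingMechanism_zero, sub_zero] at hmv
    nlinarith
  have hupper : ψ u ≤ 2 * (w - u) * D u :=
    calc ψ u = ψ w - ψ u := by linarith
      _ ≤ (w - u) * D w := sub_le_mul_branchingMechanismDeriv hπ hw hu.le
      _ ≤ (w - u) * (2 * D u) := by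
        gcongr
        exact (branchingMechanismDeriv_mono hπ hw hw2u).trans
          (branchingMechanismDeriv_two_mul_le hα₀ hπ hu.le)
      _ = 2 * (w - u) * D u := by ring
  have hlower : u * D u ≤ 4 * ψ u := by
    have hhalf := mul_branchingMechanismDeriv_le_sub hπ hu.le (half_pos hu).le (α₀ := α₀)
    have hψhalf := branchingMechanism_monotoneOn hα₀ hπ (mem_Ici.2 le_rfl)
      (mem_Ici.2 (half_pos hu).le) (half_pos hu).le
    have hD := branchingMechanismDeriv_two_mul_le hα₀ hπ (half_pos hu).le (π := π)
    rw [mul_div_cancel₀ u two_ne_zero] at hD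
    simp only [branchingMechanism_zero] at hψhalf
    nlinarith
  nlinarith

lemma branchingMechanism_nonneg (hα₀ : 0 ≤ α₀)
    (hπ : IntegrableOn (fun x : ℝ => min x (x ^ 2)) (Ioi 0) π) {x : ℝ} (hx : 0 ≤ x) :
    0 ≤ branchingMechanism π α₀ x := by
  simpa using branchingMechanism_monotoneOn hα₀ hπ self_mem_Ici (mem_Ici.2 hx) hx

lemma pos_of_rightInvOn_branchingMechanism {φ : ℝ → ℝ} (hφ : MapsTo φ (Ici 0) (Ici 0))
    (hinv : RightInvOn φ (branchingMechanism π α₀) (Ici 0)) {l : ℝ} (hl : 0 < l) : 0 < φ l :=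
  (hφ hl.le : 0 ≤ φ l).lt_of_ne fun h => hl.ne (by simpa [← h] using hinv hl.le)

lemma le_eight_mul_sub_of_rightInvOn_branchingMechanism (hα₀ : 0 ≤ α₀)
    (hπ : IntegrableOn (fun x : ℝ => min x (x ^ 2)) (Ioi 0) π) {φ : ℝ → ℝ}
    (hφ : MapsTo φ (Ici 0) (Ici 0)) (hinv : RightInvOn φ (branchingMechanism π α₀) (Ici 0))
    {l : ℝ} (hl : 0 < l) : φ l ≤ 8 * (φ (2 * l) - φ l) := by
  have h2l : (0:ℝ) ≤ 2 * l := by positivity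
  refine le_eight_mul_sub_of_branchingMechanism_eq_two_mul hα₀ hπ
    (pos_of_rightInvOn_branchingMechanism hφ hinv hl) (hφ h2l) ?_ ?_
  · rwa [hinv hl.le]
  · rw [hinv hl.le, hinv h2l]

end BranchingMechanism

section LaplaceExponent

noncomputable def laplaceExponent (μ : Measure ℝ) (l : ℝ) : ℝ :=
  ∫ r in Ioi (0:ℝ), (1 - Real.exp (-(l * r))) ∂μ

variable {μ : Measure ℝ}

lemma laplaceExponent_nonneg {l : ℝ} (hl : 0 ≤ l) : 0 ≤ laplaceExponent μ l :=
  setIntegral_nonneg measurableSet_Ioi fun r (hr : 0 < r) =>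
    sub_nonneg.2 (exp_neg_mul_le_one hl hr.le)

lemma integrableOn_of_laplaceExponent_ne_zero {l : ℝ} (h : laplaceExponent μ l ≠ 0) :
    IntegrableOn (fun r => 1 - Real.exp (-(l * r))) (Ioi 0) μ := by
  by_contra h'
  exact h (integral_undef h')

lemma laplaceExponent_le_measureReal (hμ : μ (Ioi 0) ≠ ⊤) {l : ℝ} (hl : 0 ≤ l) :
    laplaceExponent μ l ≤ μ.real (Ioi 0) :=
  calc laplaceExponent μ l ≤ ‖laplaceExponent μ l‖ := Real.le_norm_self _
    _ ≤ 1 * μ.real (Ioi 0) := norm_setIntegral_le_of_norm_le_const hμ.lt_top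
        fun r (hr : 0 < r) => by
          rw [Real.norm_of_nonneg (sub_nonneg.2 (exp_neg_mul_le_one hl hr.le))]
          linarith [Real.exp_pos (-(l * r))]
    _ = μ.real (Ioi 0) := one_mul _

lemma measure_Ioi_zero_eq_top_of_tendsto_laplaceExponent
    (h : Tendsto (laplaceExponent μ) atTop atTop) : μ (Ioi 0) = ⊤ := by
  by_contra hμ
  obtain ⟨l, hl, hl0⟩ :=
    ((h.eventually_gt_atTop (μ.real (Ioi 0))).and (eventually_ge_atTop 0)).exists
  exact hl.not_ge (laplaceExponent_le_measureReal hμ hl0)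

lemma integrableOn_Ioo_id_of_integrableOn_one_sub_exp {l : ℝ} (hl : 0 < l)
    (h : IntegrableOn (fun r => 1 - Real.exp (-(l * r))) (Ioi 0) μ) (ε : ℝ) :
    IntegrableOn (fun r => r) (Ioo 0 ε) μ := by
  refine Integrable.mono' ((h.mono_set Ioo_subset_Ioi_self).const_mul
    (l * Real.exp (-(l * ε)))⁻¹) (by fun_prop)
    (ae_restrict_of_forall_mem measurableSet_Ioo fun r hr => ?_)
  -- on `(0, ε)`: `l r e^{-l ε} ≤ l r e^{-l r} ≤ 1 - e^{-l r}`
  have hmul : l * r * Real.exp (-(l * r)) ≤ 1 - Real.exp (-(l * r)) := by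
    have := mul_le_mul_of_nonneg_left (Real.add_one_le_exp (l * r)) (Real.exp_pos (-(l * r))).le
    rw [← Real.exp_add, neg_add_cancel, Real.exp_zero] at this
    linarith
  have hexp : Real.exp (-(l * ε)) ≤ Real.exp (-(l * r)) := by
    gcongr
    exact hr.2.le
  rw [Real.norm_of_nonneg hr.1.le, ← div_eq_inv_mul, le_div_iff₀ (by positivity)]
  nlinarith [mul_le_mul_of_nonneg_left hexp (mul_pos hl hr.1).le]

/-- Splitting at `r = ε`: for small jumps `e^{-l r} - e^{-2 l r} ≤ l r`, for large ones
`e^{-l r} - e^{-2 l r} ≤ e^{-l ε} (1 - e^{-l r})`. -/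
lemma laplaceExponent_two_mul_sub_le {l ε : ℝ} (hl : 0 < l)
    (h : IntegrableOn (fun r => 1 - Real.exp (-(l * r))) (Ioi 0) μ)
    (h₂ : IntegrableOn (fun r => 1 - Real.exp (-(2 * l * r))) (Ioi 0) μ) :
    laplaceExponent μ (2 * l) - laplaceExponent μ l ≤
      l * ∫ r in Ioo (0:ℝ) ε, r ∂μ + Real.exp (-(l * ε)) * laplaceExponent μ l := by
  have hsmall := (integrableOn_Ioo_id_of_integrableOn_one_sub_exp hl h ε).integrable_indicator
    measurableSet_Ioo
  have hsplit : l * ∫ r in Ioo (0:ℝ) ε, r ∂μ + Real.exp (-(l * ε)) * laplaceExponent μ l =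
      ∫ r in Ioi (0:ℝ), (l * (Ioo 0 ε).indicator (fun r => r) r +
        Real.exp (-(l * ε)) * (1 - Real.exp (-(l * r)))) ∂μ := by
    rw [integral_add (hsmall.integrableOn.const_mul l) (h.const_mul _), integral_const_mul,
      integral_const_mul, setIntegral_indicator measurableSet_Ioo,
      inter_eq_self_of_subset_right Ioo_subset_Ioi_self, laplaceExponent]
  rw [hsplit, laplaceExponent, laplaceExponent, ← integral_sub h₂ h]
  refine setIntegral_mono_on (h₂.sub h) ((hsmall.integrableOn.const_mul l).add (h.const_mul _))
    measurableSet_Ioi fun r (hr : 0 < r) => ?_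
  have hsq : Real.exp (-(2 * l * r)) = Real.exp (-(l * r)) ^ 2 := by
    rw [← Real.exp_nat_mul]; ring_nf
  have hE := exp_neg_mul_le_one hl.le hr.le
  rw [hsq]
  by_cases hrε : r < ε
  · rw [indicator_of_mem (mem_Ioo.2 ⟨hr, hrε⟩)]
    nlinarith [Real.exp_pos (-(l * ε)), Real.exp_pos (-(l * r)),
      Real.add_one_le_exp (-(l * r))]
  · rw [indicator_of_notMem fun hmem => hrε hmem.2]
    have hexp : Real.exp (-(l * r)) ≤ Real.exp (-(l * ε)) := by
      gcongr
      exact not_lt.1 hrε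
    nlinarith [mul_le_mul_of_nonneg_right hexp (sub_nonneg.2 hE)]

lemma tendsto_inv_mul_setIntegral_Ioo_atTop
    (hint : ∀ l, 0 < l → IntegrableOn (fun r => 1 - Real.exp (-(l * r))) (Ioi 0) μ)
    (htop : Tendsto (laplaceExponent μ) atTop atTop)
    (hdouble : ∀ l, 0 < l →
      laplaceExponent μ l ≤ 8 * (laplaceExponent μ (2 * l) - laplaceExponent μ l)) :
    Tendsto (fun ε : ℝ => (1 / ε) * ∫ r in Ioo (0:ℝ) ε, r ∂μ) (𝓝[>] 0) atTop := by
  have hbound : ∀ ε : ℝ, 0 < ε →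
      laplaceExponent μ (8 * ε⁻¹) / 128 ≤ (1 / ε) * ∫ r in Ioo (0:ℝ) ε, r ∂μ := by
    intro ε hε
    have hl : 0 < 8 * ε⁻¹ := by positivity
    have hsplit :=
      laplaceExponent_two_mul_sub_le (ε := ε) hl (hint _ hl) (hint _ (by positivity))
    have hlε : 8 * ε⁻¹ * ε = 8 := by field_simp
    have hexp : Real.exp (-8) ≤ 1 / 16 := by
      rw [Real.exp_neg, inv_le_comm₀ (Real.exp_pos 8) (by norm_num)]
      linarith [Real.quadratic_le_exp_of_nonneg (x := 8) (by norm_num)]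
    rw [hlε] at hsplit
    have htail := mul_le_mul_of_nonneg_right hexp (laplaceExponent_nonneg hl.le (μ := μ))
    have hgrowth := hdouble _ hl
    rw [one_div]
    linarith
  refine tendsto_atTop_mono' _ (eventually_nhdsWithin_of_forall hbound) ?_
  exact (htop.comp (tendsto_inv_nhdsGT_zero.const_mul_atTop (by norm_num))).atTop_div_const
    (by norm_num)

end LaplaceExponent

theorem stmt_12_general (π : Measure ℝ) (α₀ : ℝ) (hα₀ : 0 ≤ α₀)
    (hπint : ∫⁻ x in Ioi (0:ℝ), ENNReal.ofReal (min x (x ^ 2)) ∂π < ⊤)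
    (ψ : ℝ → ℝ)
    (hψ : ∀ l : ℝ, 0 ≤ l →
      ψ l = α₀ * l + ∫ x in Ioi (0:ℝ), (Real.exp (-(l * x)) - 1 + l * x) ∂π)
    (φ : ℝ → ℝ)
    (hφnn : ∀ x : ℝ, 0 ≤ x → 0 ≤ φ x)
    (hinv1 : ∀ x : ℝ, 0 ≤ x → ψ (φ x) = x)
    (hinv2 : ∀ x : ℝ, 0 ≤ x → φ (ψ x) = x)
    (πs : Measure ℝ)
    (hπs : ∀ l : ℝ, 0 < l → φ l = ∫ r in Ioi (0:ℝ), (1 - Real.exp (-(l * r))) ∂πs) :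
    Tendsto (fun ε : ℝ => πs (Ioi ε)) (𝓝[>] 0) (𝓝 ⊤) ∧
      Tendsto (fun ε : ℝ => (1 / ε) * ∫ r in Ioo (0:ℝ) ε, r ∂πs) (𝓝[>] 0) atTop := by
  have hπ : IntegrableOn (fun x : ℝ => min x (x ^ 2)) (Ioi 0) π :=
    ⟨by fun_prop, (hasFiniteIntegral_iff_ofReal (ae_restrict_of_forall_mem measurableSet_Ioi
      fun x (hx : 0 < x) => le_min hx.le (sq_nonneg x))).2 hπint⟩
  have hψ' : EqOn ψ (branchingMechanism π α₀) (Ici 0) := hψ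
  have hright : RightInvOn φ (branchingMechanism π α₀) (Ici 0) := fun x hx =>
    (hψ' (hφnn x hx)).symm.trans (hinv1 x hx)
  have hleft : LeftInvOn φ (branchingMechanism π α₀) (Ici 0) := fun x hx => hψ' hx ▸ hinv2 x hx
  have hφL : ∀ l, 0 < l → φ l = laplaceExponent πs l := hπs
  have hL_top : Tendsto (laplaceExponent πs) atTop atTop :=
    (tendsto_atTop_of_leftInvOn
      (monotoneOn_of_rightInvOn (branchingMechanism_monotoneOn hα₀ hπ) hφnn hright)
      (fun _ hx => branchingMechanism_nonneg hα₀ hπ hx) hleft).congr'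
      ((eventually_gt_atTop 0).mono hφL)
  have hint : ∀ l, 0 < l → IntegrableOn (fun r => 1 - Real.exp (-(l * r))) (Ioi 0) πs :=
    fun l hl => integrableOn_of_laplaceExponent_ne_zero
      (hφL l hl ▸ (pos_of_rightInvOn_branchingMechanism hφnn hright hl).ne')
  have hdouble : ∀ l, 0 < l →
      laplaceExponent πs l ≤ 8 * (laplaceExponent πs (2 * l) - laplaceExponent πs l) := by
    intro l hl
    rw [← hφL l hl, ← hφL _ (by positivity)]
    exact le_eight_mul_sub_of_rightInvOn_branchingMechanism hα₀ hπ hφnn hright hl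
  refine ⟨?_, tendsto_inv_mul_setIntegral_Ioo_atTop hint hL_top hdouble⟩
  rw [← measure_Ioi_zero_eq_top_of_tendsto_laplaceExponent hL_top]
  exact tendsto_measure_Ioi_nhdsGT πs 0

/-- Lemma (cv-f/e): with ∫_{(0,1)} ℓ π(dℓ) = ∞, if φ is the inverse of ψ and π_* is
the Lévy measure of φ (i.e. φ(λ) = ∫ (1 − e^{−λr}) π_*(dr)), then
lim_{ε→0+} π_*((ε,∞)) = ∞ and lim_{ε→0+} (1/ε) ∫_{(0,ε)} r π_*(dr) = ∞. -/
theorem stmt_12 (π : Measure ℝ) [SigmaFinite π] (α₀ : ℝ) (hα₀ : 0 ≤ α₀)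
    (hπint : ∫⁻ x in Ioi (0:ℝ), ENNReal.ofReal (min x (x ^ 2)) ∂π < ⊤)
    (hπinf : ∫⁻ x in Ioo (0:ℝ) 1, ENNReal.ofReal x ∂π = ⊤)
    (ψ : ℝ → ℝ)
    (hψ : ∀ l : ℝ, 0 ≤ l →
      ψ l = α₀ * l + ∫ x in Ioi (0:ℝ), (Real.exp (-(l * x)) - 1 + l * x) ∂π)
    (φ : ℝ → ℝ)
    (hφnn : ∀ x : ℝ, 0 ≤ x → 0 ≤ φ x)
    (hinv1 : ∀ x : ℝ, 0 ≤ x → ψ (φ x) = x)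
    (hinv2 : ∀ x : ℝ, 0 ≤ x → φ (ψ x) = x)
    (πs : Measure ℝ) [SigmaFinite πs]
    (hπs : ∀ l : ℝ, 0 < l → φ l = ∫ r in Ioi (0:ℝ), (1 - Real.exp (-(l * r))) ∂πs) :
    Tendsto (fun ε : ℝ => πs (Ioi ε)) (𝓝[>] 0) (𝓝 ⊤) ∧
      Tendsto (fun ε : ℝ => (1 / ε) * ∫ r in Ioo (0:ℝ) ε, r ∂πs) (𝓝[>] 0) atTop :=
  stmt_12_general π α₀ hα₀ hπint ψ hψ φ hφnn hinv1 hinv2 πs hπs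
end

section
/- Let α > 1, c ≥ 0, and let N : (0,∞) → [0,∞) be nonincreasing. If lim_{n→∞} n^{−2} N(n^{−2α}) = c, then lim_{ε→0+} ε^{1/α} N(ε) = c. -/
open Set Filter Topology

/-- Let α > 1, c ≥ 0, N : (0,∞) → [0,∞) nonincreasing. If
n^{−2} N(n^{−2α}) → c, then ε^{1/α} N(ε) → c as ε → 0+. -/
theorem stmt_14 (α c : ℝ) (hα : 1 < α) (hc : 0 ≤ c)
    (N : ℝ → ℝ) (hNnn : ∀ ε : ℝ, 0 < ε → 0 ≤ N ε)
    (hNmono : AntitoneOn N (Ioi 0))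
    (hlim : Tendsto (fun n : ℕ => (n : ℝ) ^ (-(2:ℝ)) * N ((n : ℝ) ^ (-(2 * α))))
      atTop (𝓝 c)) :
    Tendsto (fun ε : ℝ => ε ^ (1 / α) * N ε) (𝓝[>] 0) (𝓝 c) := by
  have hα0 : (0:ℝ) < α := lt_trans one_pos hα
  have hβ0 : (0:ℝ) < 2 * α := by positivity
  -- helper : x ^ (-(2:ℝ)) = (x^2)⁻¹
  have hkey : ∀ x : ℝ, 0 ≤ x → x ^ (-(2:ℝ)) = (x ^ 2)⁻¹ := by
    intro x hx
    rw [Real.rpow_neg hx, show (2:ℝ) = ((2:ℕ):ℝ) by norm_num, Real.rpow_natCast]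
  -- base antitonicity of rpow with negative exponent
  have hmono : ∀ p : ℝ, 0 < p → ∀ a b : ℝ, 0 < a → a ≤ b → b ^ (-p) ≤ a ^ (-p) := by
    intro p hp a b ha hab
    rw [Real.rpow_neg ha.le, Real.rpow_neg (ha.trans_le hab).le]
    exact inv_anti₀ (Real.rpow_pos_of_pos ha p)
      (Real.rpow_le_rpow ha.le hab hp.le)
  -- the floor map
  set m : ℝ → ℕ := fun ε => ⌊ε ^ (-(1/(2*α)))⌋₊ with hm
  have h_m : Tendsto m (𝓝[>] (0:ℝ)) atTop := by
    apply tendsto_nat_floor_atTop.comp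
    have h1 : Tendsto (fun ε : ℝ => (ε⁻¹) ^ (1/(2*α))) (𝓝[>] (0:ℝ)) atTop :=
      (tendsto_rpow_atTop (by positivity)).comp tendsto_inv_nhdsGT_zero
    apply h1.congr'
    filter_upwards [self_mem_nhdsWithin] with ε (hε : ε ∈ Ioi (0:ℝ))
    rw [← Real.rpow_neg_one ε, ← Real.rpow_mul (le_of_lt hε)]
    norm_num
  -- lower and upper sequences
  set l : ℕ → ℝ := fun n => ((n:ℝ)+1) ^ (-(2:ℝ)) * N ((n:ℝ) ^ (-(2*α))) with hl_def
  set u : ℕ → ℝ := fun n => (n:ℝ) ^ (-(2:ℝ)) * N (((n:ℝ)+1) ^ (-(2*α))) with hu_def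
  have hl : Tendsto l atTop (𝓝 c) := by
    have hrat : Tendsto (fun n : ℕ => ((n:ℝ)/((n:ℝ)+1))^2) atTop (𝓝 1) := by
      have h0 := tendsto_one_div_add_atTop_nhds_zero_nat (𝕜 := ℝ)
      have := ((tendsto_const_nhds : Tendsto (fun _ : ℕ => (1:ℝ)) atTop (𝓝 1)).sub h0).pow 2
      simp only [sub_zero, one_pow] at this
      apply this.congr
      intro n
      have hne : ((n:ℝ)+1) ≠ 0 := by positivity
      field_simp
      ring
    have := hrat.mul hlim
    rw [one_mul] at this
    apply this.congr'
    filter_upwards [eventually_ge_atTop 1] with n hn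
    have hn0 : (0:ℝ) < (n:ℝ) := by exact_mod_cast hn
    have hne : ((n:ℝ)+1) ≠ 0 := by positivity
    simp only [hl_def]
    rw [hkey _ hn0.le, hkey _ (by positivity : (0:ℝ) ≤ (n:ℝ)+1)]
    field_simp
  have hu : Tendsto u atTop (𝓝 c) := by
    have hrat : Tendsto (fun n : ℕ => (((n:ℝ)+1)/(n:ℝ))^2) atTop (𝓝 1) := by
      have h0 := tendsto_one_div_atTop_nhds_zero_nat (𝕜 := ℝ)
      have := ((tendsto_const_nhds : Tendsto (fun _ : ℕ => (1:ℝ)) atTop (𝓝 1)).add h0).pow 2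
      simp only [add_zero, one_pow] at this
      apply this.congr'
      filter_upwards [eventually_ge_atTop 1] with n hn
      have hn0 : (0:ℝ) < (n:ℝ) := by exact_mod_cast hn
      field_simp
    have hshift : Tendsto (fun n : ℕ => ((n:ℝ)+1) ^ (-(2:ℝ)) * N (((n:ℝ)+1) ^ (-(2*α))))
        atTop (𝓝 c) := by
      have := hlim.comp (tendsto_add_atTop_nat 1)
      apply this.congr
      intro n
      simp [Function.comp]
    have := hrat.mul hshift
    rw [one_mul] at this
    apply this.congr'
    filter_upwards [eventually_ge_atTop 1] with n hn
    have hn0 : (0:ℝ) < (n:ℝ) := by exact_mod_cast hn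
    simp only [hu_def]
    rw [hkey _ hn0.le, hkey _ (by positivity : (0:ℝ) ≤ (n:ℝ)+1)]
    field_simp
  -- squeeze
  refine tendsto_of_tendsto_of_tendsto_of_le_of_le' (hl.comp h_m) (hu.comp h_m) ?_ ?_
  · filter_upwards [Ioo_mem_nhdsGT_of_mem (show (0:ℝ) ∈ Ico (0:ℝ) 1 by norm_num)]
      with ε hε
    obtain ⟨hε0, hε1⟩ := hε
    set x : ℝ := ε ^ (-(1/(2*α))) with hx_def
    have hx0 : 0 < x := Real.rpow_pos_of_pos hε0 _
    have hx1 : 1 < x := by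
      rw [hx_def, Real.one_lt_rpow_iff_of_pos hε0]
      right
      exact ⟨hε1, by rw [neg_lt, neg_zero]; positivity⟩
    have hn1 : 1 ≤ m ε := Nat.le_floor (by exact_mod_cast hx1.le)
    have hn0 : (0:ℝ) < (m ε : ℝ) := by exact_mod_cast hn1
    have hnx : ((m ε : ℕ):ℝ) ≤ x := Nat.floor_le hx0.le
    have hxn : x < (m ε : ℝ) + 1 := Nat.lt_floor_add_one x
    have hεx : x ^ (-(2*α)) = ε := by
      rw [hx_def, ← Real.rpow_mul hε0.le,
        show -(1/(2*α)) * -(2*α) = 1 by field_simp, Real.rpow_one]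
    have hε1α : ε ^ (1/α) = x ^ (-(2:ℝ)) := by
      rw [hx_def, ← Real.rpow_mul hε0.le]
      congr 1
      field_simp
    -- lower bound
    simp only [Function.comp_apply, hl_def]
    have hb1 : ((m ε : ℝ)+1) ^ (-(2:ℝ)) ≤ ε ^ (1/α) := by
      rw [hε1α]
      exact hmono 2 two_pos x ((m ε : ℝ)+1) hx0 hxn.le
    have hb2 : N ((m ε : ℝ) ^ (-(2*α))) ≤ N ε := by
      apply hNmono (mem_Ioi.mpr hε0) (mem_Ioi.mpr (Real.rpow_pos_of_pos hn0 _))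
      calc ε = x ^ (-(2*α)) := hεx.symm
        _ ≤ (m ε : ℝ) ^ (-(2*α)) := hmono _ hβ0 _ _ hn0 hnx
    exact mul_le_mul hb1 hb2 (hNnn _ (Real.rpow_pos_of_pos hn0 _))
      (by positivity)
  · filter_upwards [Ioo_mem_nhdsGT_of_mem (show (0:ℝ) ∈ Ico (0:ℝ) 1 by norm_num)]
      with ε hε
    obtain ⟨hε0, hε1⟩ := hε
    set x : ℝ := ε ^ (-(1/(2*α))) with hx_def
    have hx0 : 0 < x := Real.rpow_pos_of_pos hε0 _
    have hx1 : 1 < x := by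
      rw [hx_def, Real.one_lt_rpow_iff_of_pos hε0]
      right
      exact ⟨hε1, by rw [neg_lt, neg_zero]; positivity⟩
    have hn1 : 1 ≤ m ε := Nat.le_floor (by exact_mod_cast hx1.le)
    have hn0 : (0:ℝ) < (m ε : ℝ) := by exact_mod_cast hn1
    have hnx : ((m ε : ℕ):ℝ) ≤ x := Nat.floor_le hx0.le
    have hxn : x < (m ε : ℝ) + 1 := Nat.lt_floor_add_one x
    have hεx : x ^ (-(2*α)) = ε := by
      rw [hx_def, ← Real.rpow_mul hε0.le,
        show -(1/(2*α)) * -(2*α) = 1 by field_simp, Real.rpow_one]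
    have hε1α : ε ^ (1/α) = x ^ (-(2:ℝ)) := by
      rw [hx_def, ← Real.rpow_mul hε0.le]
      congr 1
      field_simp
    simp only [Function.comp_apply, hu_def]
    have hb1 : ε ^ (1/α) ≤ (m ε : ℝ) ^ (-(2:ℝ)) := by
      rw [hε1α]
      exact hmono 2 two_pos _ _ hn0 hnx
    have hb2 : N ε ≤ N (((m ε : ℝ)+1) ^ (-(2*α))) := by
      apply hNmono (mem_Ioi.mpr (Real.rpow_pos_of_pos (by positivity) _)) (mem_Ioi.mpr hε0)
      calc ((m ε : ℝ)+1) ^ (-(2*α)) ≤ x ^ (-(2*α)) := hmono _ hβ0 _ _ hx0 hxn.le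
        _ = ε := hεx
    exact mul_le_mul hb1 hb2 (hNnn _ hε0) (by positivity)
end

section
/- Let α > 1, c ≥ 0, and let M : (0,∞) → [0,∞) be nondecreasing. If lim_{n→∞} n^{2(α−1)} M(n^{−2α}) = c, then lim_{ε→0+} ε^{(1/α)−1} M(ε) = c. -/
/-!
With `t = ε ^ (-1 / (2α))`, the quantity `ε ^ (1/α - 1) * M ε` becomes `t ^ p * M (t ^ (-q))` with
`p = 2(α - 1)`, `q = 2α`: a nondecreasing power of `t` times a nonincreasing function of `t`.
For `n ≤ t ≤ n + 1` it therefore lies between `n ^ p * M ((n + 1) ^ (-q))` and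
`(n + 1) ^ p * M (n ^ (-q))`, and these differ from terms of the given convergent sequence
only by factors `(n / (n + 1)) ^ (±p) → 1`.
-/

open Set Filter Topology

lemma tendsto_natCast_div_add_one_rpow (p : ℝ) :
    Tendsto (fun n : ℕ => ((n : ℝ) / (n + 1)) ^ p) atTop (𝓝 1) := by
  simpa using (tendsto_natCast_div_add_atTop (1 : ℝ)).rpow_const (Or.inl one_ne_zero)

lemma tendsto_natCast_add_one_div_rpow (p : ℝ) :
    Tendsto (fun n : ℕ => (((n : ℝ) + 1) / n) ^ p) atTop (𝓝 1) := by
  simpa using ((tendsto_natCast_div_add_atTop (1 : ℝ)).inv₀ one_ne_zero).rpow_const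
    (Or.inl (inv_ne_zero one_ne_zero))

section AntitoneFactor

variable {p : ℝ} {g : ℝ → ℝ}

lemma rpow_mul_le_rpow_mul_of_antitoneOn (hp : 0 ≤ p) (hg : AntitoneOn g (Ioi 0))
    (hg0 : ∀ t, 0 < t → 0 ≤ g t) {a b t : ℝ} (ha : 0 < a) (hat : a ≤ t) (htb : t ≤ b) :
    a ^ p * g b ≤ t ^ p * g t ∧ t ^ p * g t ≤ b ^ p * g a := by
  have ht : 0 < t := ha.trans_le hat
  have hb : 0 < b := ht.trans_le htb
  constructor
  · exact mul_le_mul (Real.rpow_le_rpow ha.le hat hp) (hg ht hb htb) (hg0 b hb) (by positivity)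
  · exact mul_le_mul (Real.rpow_le_rpow ht.le htb hp) (hg ha ht hat) (hg0 t ht) (by positivity)

theorem tendsto_rpow_mul_atTop_of_tendsto_natCast (hp : 0 ≤ p) (hg : AntitoneOn g (Ioi 0))
    (hg0 : ∀ t, 0 < t → 0 ≤ g t) {c : ℝ}
    (h : Tendsto (fun n : ℕ => (n : ℝ) ^ p * g n) atTop (𝓝 c)) :
    Tendsto (fun t : ℝ => t ^ p * g t) atTop (𝓝 c) := by
  have hlower : Tendsto (fun n : ℕ => (n : ℝ) ^ p * g (n + 1)) atTop (𝓝 c) := by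
    have hshift := h.comp (tendsto_add_atTop_nat 1)
    refine (one_mul c ▸ (tendsto_natCast_div_add_one_rpow p).mul hshift).congr fun n => ?_
    simp only [Function.comp_apply, Nat.cast_add, Nat.cast_one]
    rw [← mul_assoc, ← Real.mul_rpow (by positivity) (by positivity),
      div_mul_cancel₀ _ (by positivity)]
  have hupper : Tendsto (fun n : ℕ => ((n : ℝ) + 1) ^ p * g n) atTop (𝓝 c) := by
    refine (one_mul c ▸ (tendsto_natCast_add_one_div_rpow p).mul h).congr' ?_
    filter_upwards [eventually_ge_atTop 1] with n hn
    have hn : (0 : ℝ) < n := by exact_mod_cast hn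
    rw [← mul_assoc, ← Real.mul_rpow (by positivity) hn.le, div_mul_cancel₀ _ hn.ne']
  refine tendsto_of_tendsto_of_tendsto_of_le_of_le'
    (hlower.comp tendsto_nat_floor_atTop) (hupper.comp tendsto_nat_floor_atTop) ?_ ?_
  all_goals
    filter_upwards [eventually_ge_atTop 1] with t ht
    have hfloor : (0 : ℝ) < ⌊t⌋₊ := by exact_mod_cast Nat.floor_pos.mpr ht
    have hbounds := rpow_mul_le_rpow_mul_of_antitoneOn hp hg hg0 hfloor
      (Nat.floor_le (by linarith)) (Nat.lt_floor_add_one t).le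
  · exact hbounds.1
  · exact hbounds.2

end AntitoneFactor

theorem tendsto_rpow_mul_nhdsGT_zero_of_tendsto_natCast {p q c : ℝ} (hp : 0 ≤ p) (hq : 0 < q)
    {M : ℝ → ℝ} (hM0 : ∀ ε, 0 < ε → 0 ≤ M ε) (hM : MonotoneOn M (Ioi 0))
    (h : Tendsto (fun n : ℕ => (n : ℝ) ^ p * M ((n : ℝ) ^ (-q))) atTop (𝓝 c)) :
    Tendsto (fun ε : ℝ => ε ^ (-(p / q)) * M ε) (𝓝[>] 0) (𝓝 c) := by
  have hg : AntitoneOn (fun t => M (t ^ (-q))) (Ioi 0) := fun s hs t ht hst =>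
    hM (Real.rpow_pos_of_pos ht _) (Real.rpow_pos_of_pos hs _)
      (Real.rpow_le_rpow_of_nonpos hs hst (by linarith))
  have hlim := (tendsto_rpow_mul_atTop_of_tendsto_natCast hp hg
    (fun t ht => hM0 _ (Real.rpow_pos_of_pos ht _)) h).comp
    (tendsto_rpow_neg_nhdsGT_zero (neg_lt_zero.mpr (one_div_pos.mpr hq)))
  refine hlim.congr' ?_
  filter_upwards [self_mem_nhdsWithin] with ε (hε : 0 < ε)
  simp only [Function.comp_apply, ← Real.rpow_mul hε.le]
  congr 2
  · field_simp
  · rw [neg_mul_neg, one_div_mul_cancel hq.ne', Real.rpow_one]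

theorem stmt_15_general (α c : ℝ) (hα : 1 < α)
    (M : ℝ → ℝ) (hMnn : ∀ ε : ℝ, 0 < ε → 0 ≤ M ε)
    (hMmono : MonotoneOn M (Ioi 0))
    (hlim : Tendsto (fun n : ℕ => (n : ℝ) ^ (2 * (α - 1)) * M ((n : ℝ) ^ (-(2 * α))))
      atTop (𝓝 c)) :
    Tendsto (fun ε : ℝ => ε ^ (1 / α - 1) * M ε) (𝓝[>] 0) (𝓝 c) := by
  have hexp : -(2 * (α - 1) / (2 * α)) = 1 / α - 1 := by
    field_simp
    ring
  simpa only [hexp] using tendsto_rpow_mul_nhdsGT_zero_of_tendsto_natCast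
    (by linarith) (by linarith) hMnn hMmono hlim

/-- Let α > 1, c ≥ 0, M : (0,∞) → [0,∞) nondecreasing. If
n^{2(α−1)} M(n^{−2α}) → c, then ε^{(1/α)−1} M(ε) → c as ε → 0+. -/
theorem stmt_15 (α c : ℝ) (hα : 1 < α) (hc : 0 ≤ c)
    (M : ℝ → ℝ) (hMnn : ∀ ε : ℝ, 0 < ε → 0 ≤ M ε)
    (hMmono : MonotoneOn M (Ioi 0))
    (hlim : Tendsto (fun n : ℕ => (n : ℝ) ^ (2 * (α - 1)) * M ((n : ℝ) ^ (-(2 * α))))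
      atTop (𝓝 c)) :
    Tendsto (fun ε : ℝ => ε ^ (1 / α - 1) * M ε) (𝓝[>] 0) (𝓝 c) :=
  stmt_15_general α c hα M hMnn hMmono hlim
end

section
/- Assume Φ(ε) ∈ (0,∞) for every ε > 0 and lim_{ε→0+} ε/Φ(ε) = 0. Then for every λ > 0 one has lim_{ε→0+} ∫_{(0,ε)} (1 − e^{−λ r/Φ(ε)}) μ(dr) = λ. -/
open MeasureTheory Set Filter Topology

/-- If Φ(ε) ∈ (0,∞) for every ε > 0 and ε/Φ(ε) → 0 as ε → 0+, then for every λ > 0: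
lim_{ε→0+} ∫_{(0,ε)} (1 − e^{−λ r/Φ(ε)}) μ(dr) = λ. -/
theorem stmt_16 (μ : Measure ℝ) [SigmaFinite μ]
    (hμint : ∫⁻ r in Ioi (0:ℝ), ENNReal.ofReal (min 1 r) ∂μ < ⊤)
    (hΦpos : ∀ ε : ℝ, 0 < ε → 0 < ∫ r in Ioo (0:ℝ) ε, r ∂μ)
    (hΦlim : Tendsto (fun ε : ℝ => ε / ∫ r in Ioo (0:ℝ) ε, r ∂μ) (𝓝[>] 0) (𝓝 0)) :
    ∀ l : ℝ, 0 < l →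
      Tendsto
        (fun ε : ℝ =>
          ∫ r in Ioo (0:ℝ) ε, (1 - Real.exp (-(l * r / ∫ u in Ioo (0:ℝ) ε, u ∂μ))) ∂μ)
        (𝓝[>] 0) (𝓝 l) := by
  intro l hl
  -- pointwise exponential bounds
  have hexp_lb : ∀ x : ℝ, 0 ≤ x → x - x ^ 2 ≤ 1 - Real.exp (-x) := by
    intro x hx
    have h1 : x + 1 ≤ Real.exp x := Real.add_one_le_exp x
    have h2 : Real.exp (-x) * Real.exp x = 1 := by
      rw [← Real.exp_add]; simp
    have h3 : 0 < Real.exp (-x) := Real.exp_pos _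
    nlinarith [Real.exp_pos x]
  have hexp_ub : ∀ x : ℝ, 0 ≤ x → 1 - Real.exp (-x) ≤ x := by
    intro x hx
    have := Real.add_one_le_exp (-x)
    linarith
  have hexp_nonneg : ∀ x : ℝ, 0 ≤ x → 0 ≤ 1 - Real.exp (-x) := by
    intro x hx
    have : Real.exp (-x) ≤ Real.exp 0 := Real.exp_le_exp.mpr (by linarith)
    rw [Real.exp_zero] at this
    linarith
  have hint : ∀ ε : ℝ, 0 < ε → IntegrableOn (fun r : ℝ => r) (Ioo (0:ℝ) ε) μ := by
    intro ε hε
    by_contra h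
    have h0 : ∫ r in Ioo (0:ℝ) ε, r ∂μ = 0 := integral_undef h
    have := hΦpos ε hε
    rw [h0] at this
    exact lt_irrefl 0 this
  set Φ : ℝ → ℝ := fun ε => ∫ u in Ioo (0:ℝ) ε, u ∂μ with hΦdef
  have key : ∀ ε : ℝ, 0 < ε →
      l - l ^ 2 * (ε / Φ ε) ≤ (∫ r in Ioo (0:ℝ) ε, (1 - Real.exp (-(l * r / Φ ε))) ∂μ) ∧
      (∫ r in Ioo (0:ℝ) ε, (1 - Real.exp (-(l * r / Φ ε))) ∂μ) ≤ l := by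
    intro ε hε
    have hΦp : 0 < Φ ε := hΦpos ε hε
    have hI := hint ε hε
    set c : ℝ := l / Φ ε with hc
    have hcpos : 0 < c := div_pos hl hΦp
    have hcr : ∀ r : ℝ, l * r / Φ ε = c * r := by
      intro r; rw [hc]; ring
    have hmeas : AEStronglyMeasurable (fun r : ℝ => 1 - Real.exp (-(l * r / Φ ε)))
        (μ.restrict (Ioo (0:ℝ) ε)) := by
      apply Continuous.aestronglyMeasurable
      fun_prop
    have hfint : IntegrableOn (fun r : ℝ => 1 - Real.exp (-(l * r / Φ ε))) (Ioo (0:ℝ) ε) μ := by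
      apply Integrable.mono' (hI.const_mul c) hmeas
      filter_upwards [ae_restrict_mem measurableSet_Ioo] with r hr
      have hr0 : 0 ≤ r := hr.1.le
      have hx : 0 ≤ l * r / Φ ε := by positivity
      rw [Real.norm_eq_abs, abs_of_nonneg (hexp_nonneg _ hx)]
      calc 1 - Real.exp (-(l * r / Φ ε)) ≤ l * r / Φ ε := hexp_ub _ hx
        _ = c * r := hcr r
    have hΦne : Φ ε ≠ 0 := ne_of_gt hΦp
    constructor
    · -- lower bound
      have hLint : IntegrableOn (fun r : ℝ => c * r - c ^ 2 * ε * r) (Ioo (0:ℝ) ε) μ :=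
        (hI.const_mul c).sub (hI.const_mul (c ^ 2 * ε))
      have hle : (∫ r in Ioo (0:ℝ) ε, (c * r - c ^ 2 * ε * r) ∂μ)
          ≤ ∫ r in Ioo (0:ℝ) ε, (1 - Real.exp (-(l * r / Φ ε))) ∂μ := by
        apply setIntegral_mono_on hLint hfint measurableSet_Ioo
        intro r hr
        have hr0 : 0 ≤ r := hr.1.le
        have hx : 0 ≤ l * r / Φ ε := by positivity
        have h1 := hexp_lb (l * r / Φ ε) hx
        rw [hcr r] at h1
        have hr2 : r ^ 2 ≤ ε * r := by nlinarith [hr.2, hr.1]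
        rw [hcr r]
        nlinarith [mul_le_mul_of_nonneg_left hr2 (sq_nonneg c), h1]
      have hcomp : (∫ r in Ioo (0:ℝ) ε, (c * r - c ^ 2 * ε * r) ∂μ)
          = l - l ^ 2 * (ε / Φ ε) := by
        rw [integral_sub (hI.const_mul c) (hI.const_mul (c ^ 2 * ε)),
          integral_const_mul, integral_const_mul]
        rw [hc]
        field_simp
        ring
      linarith [hle, hcomp.ge, hcomp.le]
    · -- upper bound
      have hle : (∫ r in Ioo (0:ℝ) ε, (1 - Real.exp (-(l * r / Φ ε))) ∂μ)
          ≤ ∫ r in Ioo (0:ℝ) ε, c * r ∂μ := by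
        apply setIntegral_mono_on hfint (hI.const_mul c) measurableSet_Ioo
        intro r hr
        have hr0 : 0 ≤ r := hr.1.le
        have hx : 0 ≤ l * r / Φ ε := by positivity
        calc 1 - Real.exp (-(l * r / Φ ε)) ≤ l * r / Φ ε := hexp_ub _ hx
          _ = c * r := hcr r
      have hcomp : (∫ r in Ioo (0:ℝ) ε, c * r ∂μ) = l := by
        rw [integral_const_mul, hc]
        field_simp
        rfl
      linarith [hle, hcomp.le]
  have hlow : Tendsto (fun ε : ℝ => l - l ^ 2 * (ε / Φ ε)) (𝓝[>] 0) (𝓝 l) := by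
    have h1 : Tendsto (fun ε : ℝ => l ^ 2 * (ε / Φ ε)) (𝓝[>] 0) (𝓝 (l ^ 2 * 0)) :=
      hΦlim.const_mul (l ^ 2)
    have h2 := h1.const_sub l
    simpa using h2
  apply tendsto_of_tendsto_of_tendsto_of_le_of_le' hlow tendsto_const_nhds
  · filter_upwards [self_mem_nhdsWithin] with ε (hε : ε ∈ Ioi (0:ℝ))
    exact (key ε hε).1
  · filter_upwards [self_mem_nhdsWithin] with ε (hε : ε ∈ Ioi (0:ℝ))
    exact (key ε hε).2
end
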